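/- arXiv:2308.13640 — 7 statements merged into one kernel-verified Lean document; each statement's English description precedes it below -/
import Mathlib

section
/- With the level-decomposition setup below, for every i with 1 ≤ i ≤ 2k, the chromatic number of the spanning subdigraph D_i^2 of D_i with arc set A_2 is at most 6. -/
variable {V : Type*}

/-- The underlying simple graph of the digraph with arc relation `A`
(a directed 2-cycle yields a single edge). -/
def underlying (A : V → V → Prop) : SimpleGraph V where
  Adj x y := x ≠ y ∧ (A x y ∨ A y x)
  symm := ⟨fun x y h => ⟨h.1.symm, h.2.symm⟩⟩
  loopless := ⟨fun x h => h.1 rfl⟩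

/-- `p` is the vertex list of a directed path in `A` from `a` to `b`
having at least `k` arcs. -/
def IsDipathFromTo (A : V → V → Prop) (p : List V) (a b : V) (k : ℕ) : Prop :=
  p.Chain' A ∧ p.Nodup ∧ p.head? = some a ∧ p.getLast? = some b ∧ k + 1 ≤ p.length

/-- The digraph `A` contains a subdivision of the four-blocks cycle `C(k1,k2,k3,k4)`:
four distinct vertices `a,b,c,d` and four directed paths `P1 : a → b` of length ≥ `k1`,
`P2 : c → b` of length ≥ `k2`, `P3 : c → d` of length ≥ `k3`, `P4 : a → d` of length ≥ `k4`,
pairwise meeting only at the shared endpoints. -/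
def HasC4Subdivision (A : V → V → Prop) (k1 k2 k3 k4 : ℕ) : Prop :=
  ∃ (a b c d : V) (p1 p2 p3 p4 : List V),
    a ≠ b ∧ a ≠ c ∧ a ≠ d ∧ b ≠ c ∧ b ≠ d ∧ c ≠ d ∧
    IsDipathFromTo A p1 a b k1 ∧
    IsDipathFromTo A p2 c b k2 ∧
    IsDipathFromTo A p3 c d k3 ∧
    IsDipathFromTo A p4 a d k4 ∧
    (∀ v ∈ p1, v ∈ p2 → v = b) ∧
    (∀ v ∈ p1, v ∉ p3) ∧
    (∀ v ∈ p1, v ∈ p4 → v = a) ∧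
    (∀ v ∈ p2, v ∈ p3 → v = c) ∧
    (∀ v ∈ p2, v ∉ p4) ∧
    (∀ v ∈ p3, v ∈ p4 → v = d)

/-- A spanning out-tree of the digraph `A`, encoded by its root, the parent map
(with `parent root = root`), and the level function (the level of a vertex is
the number of vertices of the unique directed tree path from the root to it). -/
structure SpanningOutTree (A : V → V → Prop) where
  root : V
  parent : V → V
  level : V → ℕ
  parent_root : parent root = root
  parent_arc : ∀ v, v ≠ root → A (parent v) v
  level_root : level root = 1
  level_parent : ∀ v, v ≠ root → level v = level (parent v) + 1

/-- `T.Anc y x` : `y` is an ancestor of `x` in the out-tree `T`,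
i.e. `y` lies on the tree path from the root to `x`. -/
def SpanningOutTree.Anc {A : V → V → Prop} (T : SpanningOutTree A) (y x : V) : Prop :=
  ∃ n : ℕ, T.parent^[n] x = y

/-- `T` is final if for every backward arc `(x,y)` of the digraph
(i.e. with `l_T(y) ≤ l_T(x)`), `y` is an ancestor of `x`. -/
def SpanningOutTree.IsFinal {A : V → V → Prop} (T : SpanningOutTree A) : Prop :=
  ∀ x y, A x y → T.level y ≤ T.level x → T.Anc y x

namespace C4

variable {V : Type*} {A : V → V → Prop}

lemma level_pos (T : SpanningOutTree A) (v : V) : 1 ≤ T.level v := by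
  by_cases h : v = T.root
  · subst h; rw [T.level_root]
  · rw [T.level_parent v h]; omega

lemma level_parent_le (T : SpanningOutTree A) (v : V) : T.level (T.parent v) ≤ T.level v := by
  by_cases h : v = T.root
  · subst h; rw [T.parent_root]
  · rw [T.level_parent v h]; omega

lemma iter_level_le (T : SpanningOutTree A) (n : ℕ) (v : V) :
    T.level (T.parent^[n] v) ≤ T.level v := by
  induction n with
  | zero => simp
  | succ n ih =>
      rw [Function.iterate_succ_apply']
      exact le_trans (level_parent_le T _) ih

lemma root_of_level_le_one (T : SpanningOutTree A) {v : V} (h : T.level v ≤ 1) :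
    v = T.root := by
  by_contra hv
  have h1 := T.level_parent v hv
  have h2 := level_pos T (T.parent v)
  omega

lemma iter_root (T : SpanningOutTree A) (n : ℕ) : T.parent^[n] T.root = T.root := by
  induction n with
  | zero => rfl
  | succ n ih => rw [Function.iterate_succ_apply, T.parent_root, ih]

lemma iter_level (T : SpanningOutTree A) {n : ℕ} {v : V} (h : n < T.level v) :
    T.level (T.parent^[n] v) = T.level v - n := by
  induction n with
  | zero => simp
  | succ n ih =>
      have h' : n < T.level v := by omega
      have hl := ih h'
      rw [Function.iterate_succ_apply']
      have hw : T.parent^[n] v ≠ T.root := by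
        intro he
        rw [he, T.level_root] at hl
        omega
      have h2 := T.level_parent _ hw
      omega

lemma iter_root_of_le (T : SpanningOutTree A) {n : ℕ} {v : V} (h : T.level v ≤ n + 1) :
    T.parent^[n] v = T.root := by
  induction n generalizing v with
  | zero =>
      show v = T.root
      exact root_of_level_le_one T (by omega)
  | succ n ih =>
      by_cases hv : v = T.root
      · subst hv; exact iter_root T _
      · rw [Function.iterate_succ_apply]
        apply ih
        have := T.level_parent v hv
        omega

lemma anc_level_le (T : SpanningOutTree A) {y x : V} (h : T.Anc y x) :
    T.level y ≤ T.level x := by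
  obtain ⟨n, rfl⟩ := h; exact iter_level_le T n x

lemma anc_canonical (T : SpanningOutTree A) {y x : V} (h : T.Anc y x) :
    T.parent^[T.level x - T.level y] x = y := by
  obtain ⟨n, rfl⟩ := h
  rcases lt_or_ge n (T.level x) with hn | hn
  · rw [iter_level T hn]
    have hx := level_pos T x
    have he : T.level x - (T.level x - n) = n := by omega
    rw [he]
  · have h1 : T.parent^[n] x = T.root := iter_root_of_le T (by omega)
    rw [h1, T.level_root]
    exact iter_root_of_le T (by have := level_pos T x; omega)

lemma anc_refl (T : SpanningOutTree A) (x : V) : T.Anc x x := ⟨0, rfl⟩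

lemma anc_trans (T : SpanningOutTree A) {z y x : V} (h1 : T.Anc z y) (h2 : T.Anc y x) :
    T.Anc z x := by
  obtain ⟨n, rfl⟩ := h1; obtain ⟨m, rfl⟩ := h2
  exact ⟨n + m, Function.iterate_add_apply _ n m x⟩

lemma anc_of_le (T : SpanningOutTree A) {y z x : V} (hy : T.Anc y x) (hz : T.Anc z x)
    (h : T.level y ≤ T.level z) : T.Anc y z := by
  have cy := anc_canonical T hy
  have cz := anc_canonical T hz
  have hzx := anc_level_le T hz
  have hyx := anc_level_le T hy
  refine ⟨T.level z - T.level y, ?_⟩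
  have he : T.level x - T.level y = (T.level z - T.level y) + (T.level x - T.level z) := by
    omega
  have h2 : T.parent^[T.level z - T.level y] (T.parent^[T.level x - T.level z] x) = y := by
    rw [← Function.iterate_add_apply, ← he, cy]
  rw [cz] at h2
  exact h2

lemma anc_eq_of_level_eq (T : SpanningOutTree A) {y z x : V} (hy : T.Anc y x)
    (hz : T.Anc z x) (h : T.level y = T.level z) : y = z := by
  have h1 := anc_of_le T hy hz h.le
  have h2 := anc_canonical T h1
  rw [h] at h2
  simpa using h2.symm

def pathAux (T : SpanningOutTree A) : ℕ → V → List V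
  | 0, x => [x]
  | (n+1), x => T.parent^[n+1] x :: pathAux T n x

lemma pathAux_ne_nil (T : SpanningOutTree A) (n : ℕ) (x : V) : pathAux T n x ≠ [] := by
  cases n <;> simp [pathAux]

lemma pathAux_head? (T : SpanningOutTree A) (n : ℕ) (x : V) :
    (pathAux T n x).head? = some (T.parent^[n] x) := by
  cases n <;> rfl

lemma pathAux_getLast? (T : SpanningOutTree A) (n : ℕ) (x : V) :
    (pathAux T n x).getLast? = some x := by
  induction n with
  | zero => rfl
  | succ n ih =>
      show (T.parent^[n+1] x :: pathAux T n x).getLast? = some x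
      exact Option.mem_def.mp (List.mem_getLast?_cons (Option.mem_def.mpr ih))

lemma pathAux_length (T : SpanningOutTree A) (n : ℕ) (x : V) :
    (pathAux T n x).length = n + 1 := by
  induction n with
  | zero => rfl
  | succ n ih =>
      show (pathAux T n x).length + 1 = n + 1 + 1
      rw [ih]

lemma mem_pathAux (T : SpanningOutTree A) {n : ℕ} {x v : V} :
    v ∈ pathAux T n x ↔ ∃ j, j ≤ n ∧ T.parent^[j] x = v := by
  induction n with
  | zero =>
      simp only [pathAux, List.mem_singleton]
      constructor
      · rintro rfl; exact ⟨0, Nat.zero_le _, rfl⟩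
      · rintro ⟨j, hj, rfl⟩
        obtain rfl : j = 0 := by omega
        rfl
  | succ n ih =>
      simp only [pathAux, List.mem_cons, ih]
      constructor
      · rintro (rfl | ⟨j, hj, rfl⟩)
        · exact ⟨n+1, le_rfl, rfl⟩
        · exact ⟨j, by omega, rfl⟩
      · rintro ⟨j, hj, rfl⟩
        rcases eq_or_lt_of_le hj with rfl | hlt
        · exact Or.inl rfl
        · exact Or.inr ⟨j, by omega, rfl⟩

lemma pathAux_mem_level (T : SpanningOutTree A) {n : ℕ} {x v : V} (hn : n < T.level x)
    (hv : v ∈ pathAux T n x) :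
    T.Anc v x ∧ T.level x - n ≤ T.level v ∧ T.level v ≤ T.level x := by
  obtain ⟨j, hj, rfl⟩ := (mem_pathAux T).mp hv
  have hl := iter_level T (lt_of_le_of_lt hj hn)
  exact ⟨⟨j, rfl⟩, by omega, by omega⟩

lemma pathAux_nodup (T : SpanningOutTree A) {n : ℕ} {x : V} (hn : n < T.level x) :
    (pathAux T n x).Nodup := by
  induction n with
  | zero => simp [pathAux]
  | succ n ih =>
      have hn' : n < T.level x := by omega
      show (T.parent^[n+1] x :: pathAux T n x).Nodup
      refine List.nodup_cons.mpr ⟨?_, ih hn'⟩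
      intro hmem
      have h1 := pathAux_mem_level T hn' hmem
      have h2 := iter_level T hn
      omega

lemma pathAux_chain' (T : SpanningOutTree A) {n : ℕ} {x : V} (hn : n < T.level x) :
    (pathAux T n x).Chain' A := by
  induction n with
  | zero => simp [pathAux, List.Chain', List.isChain_singleton]
  | succ n ih =>
      have hn' : n < T.level x := by omega
      show (T.parent^[n+1] x :: pathAux T n x).Chain' A
      rw [List.Chain', List.isChain_cons]
      refine ⟨?_, ih hn'⟩
      intro y hy
      rw [pathAux_head?, Option.mem_some_iff] at hy
      subst hy
      rw [Function.iterate_succ_apply']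
      apply T.parent_arc
      intro he
      have hl := iter_level T hn'
      rw [he, T.level_root] at hl
      omega

/-- The tree path from `a` down to `b`, assuming `T.Anc a b`. -/
def pathD (T : SpanningOutTree A) (a b : V) : List V := pathAux T (T.level b - T.level a) b

lemma pathD_head? (T : SpanningOutTree A) {a b : V} (h : T.Anc a b) :
    (pathD T a b).head? = some a := by
  rw [pathD, pathAux_head?, anc_canonical T h]

lemma pathD_getLast? (T : SpanningOutTree A) (a b : V) :
    (pathD T a b).getLast? = some b := pathAux_getLast? T _ b

lemma pathD_ne_nil (T : SpanningOutTree A) (a b : V) : pathD T a b ≠ [] :=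
  pathAux_ne_nil T _ b

lemma pathD_length (T : SpanningOutTree A) (a b : V) :
    (pathD T a b).length = T.level b - T.level a + 1 := pathAux_length T _ b

lemma pathD_lt (T : SpanningOutTree A) (a b : V) : T.level b - T.level a < T.level b := by
  have h1 := level_pos T a
  have h2 := level_pos T b
  omega

lemma pathD_mem (T : SpanningOutTree A) {a b v : V} (h : T.Anc a b)
    (hv : v ∈ pathD T a b) :
    T.Anc v b ∧ T.level a ≤ T.level v ∧ T.level v ≤ T.level b := by
  have h3 := pathAux_mem_level T (pathD_lt T a b) hv
  have h4 := anc_level_le T h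
  exact ⟨h3.1, by omega, h3.2.2⟩

lemma pathD_nodup (T : SpanningOutTree A) (a b : V) : (pathD T a b).Nodup :=
  pathAux_nodup T (pathD_lt T a b)

lemma pathD_chain' (T : SpanningOutTree A) (a b : V) : (pathD T a b).Chain' A :=
  pathAux_chain' T (pathD_lt T a b)

lemma pathD_self_mem (T : SpanningOutTree A) (a b : V) : b ∈ pathD T a b := by
  rw [pathD, mem_pathAux]
  exact ⟨0, Nat.zero_le _, rfl⟩

lemma ne_of_level_lt (T : SpanningOutTree A) {a b : V} (h : T.level a < T.level b) :
    a ≠ b := fun he => by subst he; omega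

lemma configI (T : SpanningOutTree A) (k : ℕ)
    {x t s u m : V}
    (haxt : A x t) (haxm : A x m) (haus : A u s)
    (hta : T.Anc t x) (hsa : T.Anc s x) (hua : T.Anc u x) (hma : T.Anc m x)
    (hts : T.level t < T.level s) (hsu : T.level s < T.level u)
    (hum : T.level u < T.level m) (hmx : T.level m < T.level x)
    (gap1 : k ≤ T.level s - T.level t + 1) (gap2 : k ≤ T.level m - T.level u) :
    HasC4Subdivision A k 1 k 1 := by
  have hAts : T.Anc t s := anc_of_le T hta hsa hts.le
  have hAum : T.Anc u m := anc_of_le T hua hma hum.le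
  refine ⟨x, s, u, m, x :: pathD T t s, [u, s], pathD T u m, [x, m],
    (ne_of_level_lt T (by omega)).symm, (ne_of_level_lt T (by omega)).symm,
    (ne_of_level_lt T (by omega)).symm, ne_of_level_lt T (by omega),
    ne_of_level_lt T (by omega), ne_of_level_lt T (by omega),
    ?_, ?_, ?_, ?_, ?_, ?_, ?_, ?_, ?_, ?_⟩
  · -- P1 : x → s
    refine ⟨?_, ?_, rfl, ?_, ?_⟩
    · rw [List.Chain', List.isChain_cons]
      refine ⟨?_, pathD_chain' T t s⟩
      intro y hy
      rw [pathD_head? T hAts, Option.mem_some_iff] at hy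
      subst hy; exact haxt
    · refine List.nodup_cons.mpr ⟨?_, pathD_nodup T t s⟩
      intro hmem
      have := (pathD_mem T hAts hmem).2.2
      omega
    · rw [List.getLast?_cons, pathD_getLast?]
      simp
    · rw [List.length_cons, pathD_length]
      omega
  · -- P2 : u → s
    refine ⟨?_, ?_, rfl, rfl, by simp⟩
    · simp [List.Chain', haus]
    · simp [ne_of_level_lt T hsu |>.symm]
  · -- P3 : u → m
    exact ⟨pathD_chain' T u m, pathD_nodup T u m, pathD_head? T hAum,
      pathD_getLast? T u m, by rw [pathD_length]; omega⟩
  · -- P4 : x → m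
    refine ⟨?_, ?_, rfl, rfl, by simp⟩
    · simp [List.Chain', haxm]
    · simp [ne_of_level_lt T hmx |>.symm]
  · -- p1 ∩ p2 ⊆ {s}
    intro v hv1 hv2
    rcases List.mem_cons.mp hv1 with rfl | hv1
    · rcases List.mem_cons.mp hv2 with rfl | hv2
      · exfalso; omega
      · simp only [List.mem_singleton] at hv2
        subst hv2; exfalso; omega
    · have hb := pathD_mem T hAts hv1
      rcases List.mem_cons.mp hv2 with rfl | hv2
      · exfalso; omega
      · simpa using hv2
  · -- p1 ∩ p3 = ∅
    intro v hv1 hv3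
    have hb3 := pathD_mem T hAum hv3
    rcases List.mem_cons.mp hv1 with rfl | hv1
    · omega
    · have hb1 := pathD_mem T hAts hv1
      omega
  · -- p1 ∩ p4 ⊆ {x}
    intro v hv1 hv4
    rcases List.mem_cons.mp hv1 with rfl | hv1
    · rfl
    · have hb := pathD_mem T hAts hv1
      rcases List.mem_cons.mp hv4 with rfl | hv4
      · exfalso; omega
      · simp only [List.mem_singleton] at hv4
        subst hv4; exfalso; omega
  · -- p2 ∩ p3 ⊆ {u}
    intro v hv2 hv3
    have hb3 := pathD_mem T hAum hv3
    rcases List.mem_cons.mp hv2 with rfl | hv2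
    · rfl
    · simp only [List.mem_singleton] at hv2
      subst hv2; exfalso; omega
  · -- p2 ∩ p4 = ∅
    intro v hv2 hv4
    rcases List.mem_cons.mp hv2 with rfl | hv2
    · rcases List.mem_cons.mp hv4 with rfl | hv4
      · omega
      · simp only [List.mem_singleton] at hv4; subst hv4; omega
    · simp only [List.mem_singleton] at hv2
      subst hv2
      rcases List.mem_cons.mp hv4 with rfl | hv4
      · omega
      · simp only [List.mem_singleton] at hv4; subst hv4; omega
  · -- p3 ∩ p4 ⊆ {m}
    intro v hv3 hv4
    have hb3 := pathD_mem T hAum hv3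
    rcases List.mem_cons.mp hv4 with rfl | hv4
    · exfalso; omega
    · simpa using hv4

lemma configII' (T : SpanningOutTree A) (k : ℕ)
    {x t u u' m s s' w : V}
    (haxt : A x t) (haxm : A x m) (haus : A u s) (hau's' : A u' s')
    (hta : T.Anc t x) (hua : T.Anc u x) (hu'a : T.Anc u' x) (hma : T.Anc m x)
    (hsa : T.Anc s x) (hs'a : T.Anc s' x) (hwa : T.Anc w x)
    (hsw : T.Anc s w) (hs'w : T.Anc s' w)
    (hwmax : T.level w = T.level s ∨ T.level w = T.level s')
    (hst : T.level s ≤ T.level w) (hs't : T.level s' ≤ T.level w)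
    (hwt : T.level w < T.level t)
    (htu : T.level t < T.level u) (huu' : T.level u < T.level u')
    (hu'm : T.level u' < T.level m) (hmx : T.level m < T.level x)
    (gap1 : k ≤ T.level u - T.level t) (gap2 : k ≤ T.level m - T.level u') :
    HasC4Subdivision A k 1 k 1 := by
  have hAtu : T.Anc t u := anc_of_le T hta hua htu.le
  have hAu'm : T.Anc u' m := anc_of_le T hu'a hma hu'm.le
  -- p1 = x :: (pathD t u ++ pathD s w), p2 = u' :: pathD s' w, p3 = pathD u' m, p4 = [x,m]
  refine ⟨x, w, u', m, x :: (pathD T t u ++ pathD T s w), u' :: pathD T s' w,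
    pathD T u' m, [x, m],
    (ne_of_level_lt T (by omega)).symm, (ne_of_level_lt T (by omega)).symm,
    (ne_of_level_lt T (by omega)).symm, ne_of_level_lt T (by omega),
    ne_of_level_lt T (by omega), ne_of_level_lt T (by omega),
    ?_, ?_, ?_, ?_, ?_, ?_, ?_, ?_, ?_, ?_⟩
  · -- P1 : x → w
    refine ⟨?_, ?_, rfl, ?_, ?_⟩
    · rw [List.Chain', List.isChain_cons]
      constructor
      · intro y hy
        rw [List.head?_append_of_ne_nil _ (pathD_ne_nil T t u), pathD_head? T hAtu,
          Option.mem_some_iff] at hy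
        subst hy; exact haxt
      · refine List.IsChain.append (pathD_chain' T t u) (pathD_chain' T s w) ?_
        intro a ha b hb
        rw [pathD_getLast?, Option.mem_some_iff] at ha
        rw [pathD_head? T hsw, Option.mem_some_iff] at hb
        subst ha; subst hb; exact haus
    · refine List.nodup_cons.mpr ⟨?_, ?_⟩
      · intro hmem
        rcases List.mem_append.mp hmem with h | h
        · have := (pathD_mem T hAtu h).2.2; omega
        · have := (pathD_mem T hsw h).2.2; omega
      · refine List.Nodup.append (pathD_nodup T t u) (pathD_nodup T s w) ?_
        intro a ha hb
        have h1 := (pathD_mem T hAtu ha).2.1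
        have h2 := (pathD_mem T hsw hb).2.2
        omega
    · rw [List.getLast?_cons, List.getLast?_append_of_ne_nil _ (pathD_ne_nil T s w),
        pathD_getLast?]
      simp
    · rw [List.length_cons, List.length_append, pathD_length, pathD_length]
      omega
  · -- P2 : u' → w
    refine ⟨?_, ?_, rfl, ?_, ?_⟩
    · rw [List.Chain', List.isChain_cons]
      refine ⟨?_, pathD_chain' T s' w⟩
      intro y hy
      rw [pathD_head? T hs'w, Option.mem_some_iff] at hy
      subst hy; exact hau's'
    · refine List.nodup_cons.mpr ⟨?_, pathD_nodup T s' w⟩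
      intro hmem
      have := (pathD_mem T hs'w hmem).2.2
      omega
    · rw [List.getLast?_cons, pathD_getLast?]; simp
    · rw [List.length_cons, pathD_length]; omega
  · -- P3 : u' → m
    exact ⟨pathD_chain' T u' m, pathD_nodup T u' m, pathD_head? T hAu'm,
      pathD_getLast? T u' m, by rw [pathD_length]; omega⟩
  · -- P4 : x → m
    refine ⟨?_, ?_, rfl, rfl, by simp⟩
    · simp [List.Chain', haxm]
    · simp [ne_of_level_lt T hmx |>.symm]
  · -- p1 ∩ p2 ⊆ {w}
    intro v hv1 hv2
    rcases List.mem_cons.mp hv1 with rfl | hv1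
    · rcases List.mem_cons.mp hv2 with rfl | hv2
      · exfalso; omega
      · exfalso; have := (pathD_mem T hs'w hv2).2.2; omega
    · rcases List.mem_append.mp hv1 with h1 | h1
      · have hb1 := pathD_mem T hAtu h1
        rcases List.mem_cons.mp hv2 with rfl | hv2
        · exfalso; omega
        · exfalso; have := (pathD_mem T hs'w hv2).2.2; omega
      · have hb1 := pathD_mem T hsw h1
        rcases List.mem_cons.mp hv2 with rfl | hv2
        · exfalso; omega
        · have hb2 := pathD_mem T hs'w hv2
          -- level v = level w, v and w ancestors of x
          have hvx : T.Anc v x := anc_trans T hb1.1 hwa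
          refine anc_eq_of_level_eq T hvx hwa ?_
          omega
  · -- p1 ∩ p3 = ∅
    intro v hv1 hv3
    have hb3 := pathD_mem T hAu'm hv3
    rcases List.mem_cons.mp hv1 with rfl | hv1
    · omega
    · rcases List.mem_append.mp hv1 with h1 | h1
      · have := (pathD_mem T hAtu h1).2.1
        have := (pathD_mem T hAtu h1).2.2
        omega
      · have := (pathD_mem T hsw h1).2.2
        omega
  · -- p1 ∩ p4 ⊆ {x}
    intro v hv1 hv4
    rcases List.mem_cons.mp hv1 with rfl | hv1
    · rfl
    · exfalso
      rcases List.mem_append.mp hv1 with h1 | h1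
      · have hb := pathD_mem T hAtu h1
        rcases List.mem_cons.mp hv4 with rfl | hv4
        · omega
        · simp only [List.mem_singleton] at hv4; subst hv4; omega
      · have hb := pathD_mem T hsw h1
        rcases List.mem_cons.mp hv4 with rfl | hv4
        · omega
        · simp only [List.mem_singleton] at hv4; subst hv4; omega
  · -- p2 ∩ p3 ⊆ {u'}
    intro v hv2 hv3
    have hb3 := pathD_mem T hAu'm hv3
    rcases List.mem_cons.mp hv2 with rfl | hv2
    · rfl
    · exfalso
      have := (pathD_mem T hs'w hv2).2.2
      omega
  · -- p2 ∩ p4 = ∅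
    intro v hv2 hv4
    have h4 : v = x ∨ v = m := by
      rcases List.mem_cons.mp hv4 with rfl | hv4
      · exact Or.inl rfl
      · simp only [List.mem_singleton] at hv4; exact Or.inr hv4
    rcases List.mem_cons.mp hv2 with rfl | hv2
    · rcases h4 with rfl | rfl <;> omega
    · have := (pathD_mem T hs'w hv2).2.2
      rcases h4 with rfl | rfl <;> omega
  · -- p3 ∩ p4 ⊆ {m}
    intro v hv3 hv4
    have hb3 := pathD_mem T hAu'm hv3
    rcases List.mem_cons.mp hv4 with rfl | hv4
    · exfalso; omega
    · simpa using hv4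

lemma configII (T : SpanningOutTree A) (k : ℕ)
    {x t u u' m s s' : V}
    (haxt : A x t) (haxm : A x m) (haus : A u s) (hau's' : A u' s')
    (hta : T.Anc t x) (hua : T.Anc u x) (hu'a : T.Anc u' x) (hma : T.Anc m x)
    (hsa : T.Anc s x) (hs'a : T.Anc s' x)
    (hst : T.level s < T.level t) (hs't : T.level s' < T.level t)
    (htu : T.level t < T.level u) (huu' : T.level u < T.level u')
    (hu'm : T.level u' < T.level m) (hmx : T.level m < T.level x)
    (gap1 : k ≤ T.level u - T.level t) (gap2 : k ≤ T.level m - T.level u') :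
    HasC4Subdivision A k 1 k 1 := by
  rcases le_total (T.level s) (T.level s') with hc | hc
  · exact configII' T k haxt haxm haus hau's' hta hua hu'a hma hsa hs'a hs'a
      (anc_of_le T hsa hs'a hc) (anc_refl T s') (Or.inr rfl) hc le_rfl hs't
      htu huu' hu'm hmx gap1 gap2
  · exact configII' T k haxt haxm haus hau's' hta hua hu'a hma hsa hs'a hsa
      (anc_refl T s) (anc_of_le T hs'a hsa hc) (Or.inl rfl) le_rfl hc hst
      htu huu' hu'm hmx gap1 gap2

noncomputable def mex (s : Finset ℕ) : ℕ := sInf {n | n ∉ s}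

lemma mex_not_mem (s : Finset ℕ) : mex s ∉ s := by
  have hne : {n : ℕ | n ∉ s}.Nonempty := by
    refine ⟨s.sup id + 1, fun h => ?_⟩
    have := Finset.le_sup (f := id) h
    simp only [id] at this
    omega
  exact Nat.sInf_mem hne

lemma mem_of_lt_mex {s : Finset ℕ} {m : ℕ} (h : m < mex s) : m ∈ s := by
  by_contra hm
  have h2 : mex s ≤ m := Nat.sInf_le hm
  omega

open Classical in
noncomputable def heads [Fintype V] (S : V → V → Prop) (x : V) : Finset V :=
  Finset.univ.filter (fun y => S x y)

lemma mem_heads [Fintype V] {S : V → V → Prop} {x y : V} :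
    y ∈ heads S x ↔ S x y := by
  classical
  rw [heads]
  simp only [Finset.mem_filter, Finset.mem_univ, true_and]

noncomputable def colAux [Fintype V] (S : V → V → Prop) : ℕ → V → ℕ
  | 0, _ => 0
  | (n+1), x => mex ((heads S x).image (colAux S n))

noncomputable def col [Fintype V] (T : SpanningOutTree A) (S : V → V → Prop) (x : V) : ℕ :=
  colAux S (T.level x) x

lemma colAux_congr [Fintype V] (T : SpanningOutTree A) (S : V → V → Prop)
    (hS : ∀ x y, S x y → T.level y < T.level x) :
    ∀ n x, T.level x ≤ n → colAux S n x = colAux S (T.level x) x := by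
  intro n
  induction n using Nat.strong_induction_on with
  | _ n ih =>
    intro x hx
    rcases eq_or_lt_of_le hx with he | hlt
    · rw [he]
    · obtain ⟨m, rfl⟩ : ∃ m, n = m + 1 := ⟨n - 1, by have := level_pos T x; omega⟩
      obtain ⟨l, hl⟩ : ∃ l, T.level x = l + 1 := ⟨T.level x - 1, by have := level_pos T x; omega⟩
      rw [hl]
      show mex ((heads S x).image (colAux S m)) = mex ((heads S x).image (colAux S l))
      congr 1
      apply Finset.image_congr
      intro y hy
      simp only [Finset.mem_coe, mem_heads] at hy
      have hyl := hS x y hy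
      rw [ih m (by omega) y (by omega), ih l (by omega) y (by omega)]

lemma col_eq [Fintype V] (T : SpanningOutTree A) (S : V → V → Prop)
    (hS : ∀ x y, S x y → T.level y < T.level x) (x : V) :
    col T S x = mex ((heads S x).image (col T S)) := by
  obtain ⟨l, hl⟩ : ∃ l, T.level x = l + 1 := ⟨T.level x - 1, by have := level_pos T x; omega⟩
  rw [col, hl]
  show mex ((heads S x).image (colAux S l)) = _
  congr 1
  apply Finset.image_congr
  intro y hy
  simp only [Finset.mem_coe, mem_heads] at hy
  have hyl := hS x y hy
  rw [col, colAux_congr T S hS l y (by omega)]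

lemma col_ne [Fintype V] (T : SpanningOutTree A) (S : V → V → Prop)
    (hS : ∀ x y, S x y → T.level y < T.level x) {x y : V} (h : S x y) :
    col T S x ≠ col T S y := by
  intro he
  have h1 := col_eq T S hS x
  have h2 : col T S y ∈ (heads S x).image (col T S) :=
    Finset.mem_image_of_mem _ (mem_heads.mpr h)
  rw [← he, h1] at h2
  exact mex_not_mem _ h2

lemma vi_gap (T : SpanningOutTree A) {k i : ℕ} (hk : 0 < k) {a b : V}
    (ha : ∃ α, T.level a = i + α * (2*k)) (hb : ∃ β, T.level b = i + β * (2*k))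
    (h : T.level a < T.level b) : T.level a + 2*k ≤ T.level b := by
  obtain ⟨α, hα⟩ := ha; obtain ⟨β, hβ⟩ := hb
  rcases le_or_gt β α with hle | hlt
  · exfalso
    have h1 : β * (2*k) ≤ α * (2*k) := mul_le_mul_left hle _
    omega
  · have h2 : α + 1 ≤ β := hlt
    have h3 : (α + 1) * (2*k) ≤ β * (2*k) := mul_le_mul_left h2 _
    have h4 : (α + 1) * (2*k) = α * (2*k) + 2*k := by ring
    omega

def A2 (T : SpanningOutTree A) (k i : ℕ) : V → V → Prop := fun x y =>
  A x y ∧ (∃ α : ℕ, T.level x = i + α * (2 * k)) ∧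
    (∃ α : ℕ, T.level y = i + α * (2 * k)) ∧ T.level y < T.level x ∧ T.Anc y x

lemma fin_pick : ∀ jt jm : Fin 6, ∃ a b : Fin 6,
    2 ≤ (a:ℕ) ∧ 2 ≤ (b:ℕ) ∧ a ≠ b ∧ a ≠ jt ∧ a ≠ jm ∧ b ≠ jt ∧ b ≠ jm := by decide

lemma col_lt_six [Fintype V] (T : SpanningOutTree A) (k i : ℕ) (hk : 0 < k)
    (hno : ¬ HasC4Subdivision A k 1 k 1) (x : V) : col T (A2 T k i) x < 6 := by
  classical
  set S := A2 T k i with hSdef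
  have hS : ∀ a b, S a b → T.level b < T.level a := fun a b h => h.2.2.2.1
  by_contra h6
  push_neg at h6
  have hex : ∀ j : Fin 6, ∃ z, S x z ∧ col T S z = (j : ℕ) := by
    intro j
    have hjlt := j.isLt
    have hj : (j : ℕ) ∈ (heads S x).image (col T S) := by
      apply mem_of_lt_mex
      rw [← col_eq T S hS x]
      omega
    obtain ⟨z, hz, hcz⟩ := Finset.mem_image.mp hj
    exact ⟨z, mem_heads.mp hz, hcz⟩
  choose y hyS hycol using hex
  have yinj : Function.Injective y := by
    intro a b hab
    have hab2 : (a : ℕ) = b := by rw [← hycol a, ← hycol b, hab]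
    exact Fin.ext hab2
  have hanc : ∀ j, T.Anc (y j) x := fun j => (hyS j).2.2.2.2
  have hlt : ∀ j, T.level (y j) < T.level x := fun j => (hyS j).2.2.2.1
  have hlevel_ne : ∀ a b : Fin 6, a ≠ b → T.level (y a) ≠ T.level (y b) := by
    intro a b hab he
    exact hab (yinj (anc_eq_of_level_eq T (hanc a) (hanc b) he))
  obtain ⟨jt, hjt⟩ : ∃ jt : Fin 6, ∀ j, T.level (y jt) ≤ T.level (y j) := by
    obtain ⟨jt, _, h⟩ := Finset.exists_min_image (Finset.univ : Finset (Fin 6))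
      (fun j => T.level (y j)) ⟨0, Finset.mem_univ 0⟩
    exact ⟨jt, fun j => h j (Finset.mem_univ j)⟩
  obtain ⟨jm, hjm⟩ : ∃ jm : Fin 6, ∀ j, T.level (y j) ≤ T.level (y jm) := by
    obtain ⟨jm, _, h⟩ := Finset.exists_max_image (Finset.univ : Finset (Fin 6))
      (fun j => T.level (y j)) ⟨0, Finset.mem_univ 0⟩
    exact ⟨jm, fun j => h j (Finset.mem_univ j)⟩
  have key : ∀ p q : Fin 6, 2 ≤ (p:ℕ) → 2 ≤ (q:ℕ) → p ≠ jt → p ≠ jm → q ≠ jt → q ≠ jm →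
      T.level (y p) < T.level (y q) → False := by
    intro p q hp2 hq2 hpjt hpjm hqjt hqjm hpq
    have hpt : T.level (y jt) < T.level (y p) :=
      lt_of_le_of_ne (hjt p) (hlevel_ne jt p hpjt.symm)
    have hqm : T.level (y q) < T.level (y jm) :=
      lt_of_le_of_ne (hjm q) (hlevel_ne q jm hqjm)
    have hsig : ∀ j : Fin 6, 2 ≤ (j:ℕ) → j ≠ jt → j ≠ jm →
        ∃ σ, S (y j) σ ∧ T.level σ < T.level (y jt) := by
      intro j hj2 hjjt hjjm
      have hjt_lt : T.level (y jt) < T.level (y j) :=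
        lt_of_le_of_ne (hjt j) (hlevel_ne jt j hjjt.symm)
      have hjm_gt : T.level (y j) < T.level (y jm) :=
        lt_of_le_of_ne (hjm j) (hlevel_ne j jm hjjm)
      have hbound : ∀ σ, S (y j) σ → T.level σ ≤ T.level (y jt) := by
        intro σ hσ
        by_contra hgt
        push_neg at hgt
        refine hno (configI T k (hyS jt).1 (hyS jm).1 hσ.1 (hanc jt)
          (anc_trans T hσ.2.2.2.2 (hanc j)) (hanc j) (hanc jm)
          hgt hσ.2.2.2.1 hjm_gt (hlt jm) ?_ ?_)
        · have := vi_gap T hk (hyS jt).2.2.1 hσ.2.2.1 hgt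
          omega
        · have := vi_gap T hk (hyS j).2.2.1 (hyS jm).2.2.1 hjm_gt
          omega
      have hcj : 2 ≤ col T S (y j) := by rw [hycol j]; exact hj2
      have hget : ∀ n : ℕ, n < 2 → ∃ σ, S (y j) σ ∧ col T S σ = n := by
        intro n hn
        have hmem : n ∈ (heads S (y j)).image (col T S) := by
          apply mem_of_lt_mex
          rw [← col_eq T S hS]
          omega
        obtain ⟨σ, hσ, hcσ⟩ := Finset.mem_image.mp hmem
        exact ⟨σ, mem_heads.mp hσ, hcσ⟩
      obtain ⟨σ0, hσ0, hc0⟩ := hget 0 (by omega)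
      obtain ⟨σ1, hσ1, hc1⟩ := hget 1 (by omega)
      have hσne : σ0 ≠ σ1 := fun he => by
        rw [he, hc1] at hc0
        exact absurd hc0 one_ne_zero
      have hb0 := hbound σ0 hσ0
      have hb1 := hbound σ1 hσ1
      have hlne : T.level σ0 ≠ T.level σ1 := fun he =>
        hσne (anc_eq_of_level_eq T hσ0.2.2.2.2 hσ1.2.2.2.2 he)
      rcases lt_or_ge (T.level σ0) (T.level (y jt)) with hlt0 | hge0
      · exact ⟨σ0, hσ0, hlt0⟩
      · exact ⟨σ1, hσ1, by omega⟩
    obtain ⟨σp, hσpS, hσp⟩ := hsig p hp2 hpjt hpjm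
    obtain ⟨σq, hσqS, hσq⟩ := hsig q hq2 hqjt hqjm
    refine hno (configII T k (hyS jt).1 (hyS jm).1 hσpS.1 hσqS.1
      (hanc jt) (hanc p) (hanc q) (hanc jm)
      (anc_trans T hσpS.2.2.2.2 (hanc p)) (anc_trans T hσqS.2.2.2.2 (hanc q))
      hσp hσq hpt hpq hqm (hlt jm) ?_ ?_)
    · have := vi_gap T hk (hyS jt).2.2.1 (hyS p).2.2.1 hpt
      omega
    · have := vi_gap T hk (hyS q).2.2.1 (hyS jm).2.2.1 hqm
      omega
  obtain ⟨a, b, ha2, hb2, hab, hajt, hajm, hbjt, hbjm⟩ := fin_pick jt jm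
  rcases lt_trichotomy (T.level (y a)) (T.level (y b)) with h | h | h
  · exact key a b ha2 hb2 hajt hajm hbjt hbjm h
  · exact absurd h (hlevel_ne a b hab)
  · exact key b a hb2 ha2 hbjt hbjm hajt hajm h

end C4

/-- With the level decomposition of a digraph `D` with a final spanning out-tree `T`
and no subdivision of `C(k,1,k,1)`: for `1 ≤ i ≤ 2k`, the spanning subdigraph
`D_i^2` of `D_i = D[V_i]` with arc set
`A_2 = {(x,y) : l_T(x) > l_T(y) and y is an ancestor of x}`
has chromatic number at most `6`. -/
theorem chromatic_Di2_le_six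
    {V : Type*} [Fintype V] (A : V → V → Prop) (hirr : ∀ v : V, ¬ A v v)
    (k : ℕ) (hk : 0 < k)
    (T : SpanningOutTree A) (hfin : T.IsFinal)
    (hno : ¬ HasC4Subdivision A k 1 k 1)
    (i : ℕ) (hi1 : 1 ≤ i) (hi2 : i ≤ 2 * k) :
    (underlying (fun x y : V =>
        A x y ∧
        (∃ α : ℕ, T.level x = i + α * (2 * k)) ∧
        (∃ α : ℕ, T.level y = i + α * (2 * k)) ∧
        T.level y < T.level x ∧ T.Anc y x)).chromaticNumber ≤ 6 := by
  classical
  have hS : ∀ a b : V, C4.A2 T k i a b → T.level b < T.level a := fun a b h => h.2.2.2.1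
  have hcol := C4.col_lt_six T k i hk hno
  have hc : (underlying (C4.A2 T k i)).Colorable 6 := by
    refine ⟨SimpleGraph.Coloring.mk (fun v => (⟨C4.col T (C4.A2 T k i) v, hcol v⟩ : Fin 6)) ?_⟩
    intro v w hvw heq
    have hcc : C4.col T (C4.A2 T k i) v = C4.col T (C4.A2 T k i) w := by
      simpa using congrArg Fin.val heq
    rcases (show v ≠ w ∧ _ from hvw).2 with h | h
    · exact C4.col_ne T _ hS h hcc
    · exact C4.col_ne T _ hS h hcc.symm
  have hfin6 := hc.chromaticNumber_le
  exact_mod_cast hfin6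
end

section
/- Let k be a positive integer and let D be a digraph containing no subdivision of C(k,1,k,1) that has a Hamiltonian directed cycle C. Let u, v, w, x, x' be five vertices of D such that uv is an edge of the underlying graph G(D) not lying on C, w lies on the open arc C]u,v[ of C, and x, x' lie on the open arc C]v,u[ in such a way that the segment C[v,x] has exactly k vertices and the segment C[x',u] has exactly k vertices. If (v,u) is an arc of D, then w has at most 2 neighbors in G(D) among the vertices of C]x,x'[. -/
variable {V : Type*}

section Helpers
variable {V : Type*} {n : ℕ} [NeZero n] (e : ZMod n ≃ V) {A : V → V → Prop}

/-- The list of `l+1` consecutive vertices of the Hamiltonian cycle starting at `e i`. -/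
def seg (i : ZMod n) (l : ℕ) : List V :=
  (List.range (l+1)).map (fun t : ℕ => e (i + (t : ZMod n)))

lemma seg_length (i : ZMod n) (l : ℕ) : (seg e i l).length = l + 1 := by
  simp [seg]

lemma seg_head? (i : ZMod n) (l : ℕ) : (seg e i l).head? = some (e i) := by
  rw [seg, List.range_succ_eq_map]
  simp

lemma seg_getLast? (i : ZMod n) (l : ℕ) : (seg e i l).getLast? = some (e (i + (l : ZMod n))) := by
  rw [seg, List.range_succ, List.map_append]
  simp

lemma seg_chain (hC : ∀ z : ZMod n, A (e z) (e (z+1))) (i : ZMod n) (l : ℕ) :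
    (seg e i l).Chain' A := by
  unfold List.Chain'
  rw [seg, List.isChain_map, List.isChain_range_succ]
  intro m _
  have := hC (i + (m : ZMod n))
  simpa [add_assoc] using this

lemma e_inj (i : ZMod n) {s t : ℕ} (hs : s < n) (ht : t < n)
    (h : e (i + (s : ZMod n)) = e (i + (t : ZMod n))) : s = t := by
  have h2 : ((s : ZMod n)) = t := add_left_cancel (e.injective h)
  have := congrArg ZMod.val h2
  rwa [ZMod.val_cast_of_lt hs, ZMod.val_cast_of_lt ht] at this

lemma seg_nodup (i : ZMod n) {l : ℕ} (hl : l < n) : (seg e i l).Nodup := by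
  refine List.Nodup.map_on ?_ List.nodup_range
  intro s hs t ht h
  rw [List.mem_range] at hs ht
  exact e_inj e i (by omega) (by omega) h

lemma mem_seg {y : V} {i : ZMod n} {l : ℕ} :
    y ∈ seg e i l ↔ ∃ t ≤ l, y = e (i + (t : ZMod n)) := by
  simp only [seg, List.mem_map, List.mem_range]
  constructor
  · rintro ⟨t, ht, rfl⟩; exact ⟨t, by omega, rfl⟩
  · rintro ⟨t, ht, rfl⟩; exact ⟨t, by omega, rfl⟩

/-- membership reexpressed relative to a base point -/
lemma mem_seg' {y : V} {i : ZMod n} {c₀ l : ℕ} :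
    y ∈ seg e (i + (c₀ : ZMod n)) l ↔
      ∃ c, c₀ ≤ c ∧ c ≤ c₀ + l ∧ y = e (i + (c : ZMod n)) := by
  rw [mem_seg]
  constructor
  · rintro ⟨t, ht, rfl⟩
    exact ⟨c₀ + t, by omega, by omega, by rw [add_assoc]; push_cast; ring_nf⟩
  · rintro ⟨c, hc1, hc2, rfl⟩
    refine ⟨c - c₀, by omega, ?_⟩
    have h : c₀ + (c - c₀) = c := by omega
    rw [add_assoc, ← Nat.cast_add, h]

lemma seg_isDipath (hC : ∀ z : ZMod n, A (e z) (e (z+1))) (i : ZMod n) {l k : ℕ}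
    (hl : l < n) (hk : k ≤ l) :
    IsDipathFromTo A (seg e i l) (e i) (e (i + (l : ZMod n))) k :=
  ⟨seg_chain e hC i l, seg_nodup e i hl, seg_head? e i l, seg_getLast? e i l,
    by rw [seg_length]; omega⟩

end Helpers

section Construct
variable {V : Type*} {n : ℕ} [NeZero n] (e : ZMod n ≃ V) {A : V → V → Prop}

lemma getLast?_cons_of_ne_nil {α : Type*} {a : α} {l : List α} (h : l ≠ []) :
    (a :: l).getLast? = l.getLast? := by
  cases l with
  | nil => simp at h
  | cons b t => exact List.getLast?_cons_cons

lemma pair_isDipath {a b : V} (h : A a b) (hne : a ≠ b) :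
    IsDipathFromTo A [a, b] a b 1 :=
  ⟨List.isChain_pair.mpr h, by simp [hne], rfl, rfl, le_refl _⟩

lemma seg_ne_nil (i : ZMod n) (l : ℕ) : seg e i l ≠ [] := by
  intro h
  have := seg_length e i l
  rw [h] at this
  simp at this

lemma cons_seg_isDipath (hC : ∀ z : ZMod n, A (e z) (e (z+1))) {a : V} {i : ZMod n} {l k : ℕ}
    (ha : A a (e i)) (hmem : a ∉ seg e i l) (hl : l < n) (hk : k ≤ l + 1) :
    IsDipathFromTo A (a :: seg e i l) a (e (i + (l : ZMod n))) k := by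
  refine ⟨?_, ?_, rfl, ?_, ?_⟩
  · unfold List.Chain'
    rw [List.isChain_cons]
    refine ⟨?_, seg_chain e hC i l⟩
    intro y hy
    rw [seg_head? e i l, Option.mem_some_iff] at hy
    subst hy; exact ha
  · rw [List.nodup_cons]
    exact ⟨hmem, seg_nodup e i hl⟩
  · rw [getLast?_cons_of_ne_nil (seg_ne_nil e i l)]
    exact seg_getLast? e i l
  · simp only [List.length_cons, seg_length]; omega

lemma seg_snoc_isDipath (hC : ∀ z : ZMod n, A (e z) (e (z+1))) {z : V} {i : ZMod n} {l k : ℕ}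
    (hz : A (e (i + (l : ZMod n))) z) (hmem : z ∉ seg e i l) (hl : l < n) (hk : k ≤ l + 1) :
    IsDipathFromTo A (seg e i l ++ [z]) (e i) z k := by
  refine ⟨?_, ?_, ?_, List.getLast?_concat, ?_⟩
  · unfold List.Chain'
    rw [List.isChain_append]
    refine ⟨seg_chain e hC i l, List.isChain_singleton z, ?_⟩
    intro p hp q hq
    rw [seg_getLast? e i l, Option.mem_some_iff] at hp
    simp only [List.head?_cons, Option.mem_some_iff] at hq
    subst hp; subst hq; exact hz
  · rw [List.nodup_append]
    exact ⟨seg_nodup e i hl, List.nodup_singleton z, by simpa using (fun a ha h => hmem (h ▸ ha) : ∀ a ∈ seg e i l, ¬a = z)⟩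
  · rw [List.head?_append, seg_head? e i l]
    rfl
  · simp only [List.length_append, seg_length, List.length_singleton]; omega

/-- The construction when two arcs go out of `w` (position `W`) to positions
`K+mi` and `K+mj`. -/
lemma constructOUT (hC : ∀ z : ZMod n, A (e z) (e (z+1)))
    (iv : ZMod n) (k K U W mi mj : ℕ)
    (hkK : k ≤ K + 1)
    (hmi : 0 < mi) (hij : mi < mj) (hjU : mj + 2*K < U)
    (hUW : U < W) (hWn : W < n)
    (hvu : A (e (iv + ((0:ℕ) : ZMod n))) (e (iv + ((U:ℕ) : ZMod n))))
    (hai : A (e (iv + ((W:ℕ) : ZMod n))) (e (iv + ((K+mi : ℕ) : ZMod n))))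
    (haj : A (e (iv + ((W:ℕ) : ZMod n))) (e (iv + ((K+mj : ℕ) : ZMod n)))) :
    HasC4Subdivision A k 1 k 1 := by
  have key : ∀ (c1 c2 : ℕ), c1 < n → c2 < n →
      e (iv + (c1 : ZMod n)) = e (iv + (c2 : ZMod n)) → c1 = c2 :=
    fun c1 c2 h1 h2 h => e_inj e iv h1 h2 h
  have kne : ∀ (c1 c2 : ℕ), c1 < n → c2 < n → c1 ≠ c2 →
      e (iv + (c1 : ZMod n)) ≠ e (iv + (c2 : ZMod n)) :=
    fun c1 c2 h1 h2 hne h => hne (key c1 c2 h1 h2 h)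
  set P1 : List V := e (iv + ((W:ℕ) : ZMod n)) :: seg e (iv + ((K+mj : ℕ) : ZMod n)) (U - (K+mj)) with hP1
  set P2 : List V := [e (iv + ((0:ℕ) : ZMod n)), e (iv + ((U:ℕ) : ZMod n))] with hP2
  set P3 : List V := seg e (iv + ((0:ℕ) : ZMod n)) (K + mi) with hP3
  set P4 : List V := [e (iv + ((W:ℕ) : ZMod n)), e (iv + ((K+mi : ℕ) : ZMod n))] with hP4
  -- membership characterizations
  have hmem1 : ∀ y ∈ P1, ∃ c, c < n ∧ (c = W ∨ (K + mj ≤ c ∧ c ≤ U)) ∧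
      y = e (iv + (c : ZMod n)) := by
    intro y hy
    rcases List.mem_cons.mp hy with rfl | hy'
    · exact ⟨W, hWn, Or.inl rfl, rfl⟩
    · obtain ⟨c, h1, h2, rfl⟩ := (mem_seg' e).mp hy'
      exact ⟨c, by omega, Or.inr ⟨h1, by omega⟩, rfl⟩
  have hmem2 : ∀ y ∈ P2, ∃ c, c < n ∧ (c = 0 ∨ c = U) ∧ y = e (iv + (c : ZMod n)) := by
    intro y hy
    rcases List.mem_pair.mp hy with rfl | rfl
    · exact ⟨0, by omega, Or.inl rfl, rfl⟩
    · exact ⟨U, by omega, Or.inr rfl, rfl⟩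
  have hmem3 : ∀ y ∈ P3, ∃ c, c < n ∧ c ≤ K + mi ∧ y = e (iv + (c : ZMod n)) := by
    intro y hy
    obtain ⟨c, h1, h2, rfl⟩ := (mem_seg' e).mp hy
    exact ⟨c, by omega, by omega, rfl⟩
  have hmem4 : ∀ y ∈ P4, ∃ c, c < n ∧ (c = W ∨ c = K + mi) ∧ y = e (iv + (c : ZMod n)) := by
    intro y hy
    rcases List.mem_pair.mp hy with rfl | rfl
    · exact ⟨W, hWn, Or.inl rfl, rfl⟩
    · exact ⟨K + mi, by omega, Or.inr rfl, rfl⟩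
  refine ⟨e (iv + ((W:ℕ) : ZMod n)), e (iv + ((U:ℕ) : ZMod n)), e (iv + ((0:ℕ) : ZMod n)),
    e (iv + ((K+mi : ℕ) : ZMod n)), P1, P2, P3, P4,
    kne _ _ hWn (by omega) (by omega), kne _ _ hWn (by omega) (by omega),
    kne _ _ hWn (by omega) (by omega), kne _ _ (by omega) (by omega) (by omega),
    kne _ _ (by omega) (by omega) (by omega), kne _ _ (by omega) (by omega) (by omega),
    ?_, ?_, ?_, ?_, ?_, ?_, ?_, ?_, ?_, ?_⟩
  · -- P1 dipath from w to u
    have := cons_seg_isDipath e hC (a := e (iv + ((W:ℕ) : ZMod n)))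
      (i := iv + ((K+mj : ℕ) : ZMod n)) (l := U - (K+mj)) (k := k) haj ?_ (by omega) (by omega)
    · rw [add_assoc, ← Nat.cast_add, (show K + mj + (U - (K+mj)) = U by omega)] at this
      exact this
    · intro hmem
      obtain ⟨c, h1, h2, hc⟩ := (mem_seg' e).mp hmem
      exact kne W c hWn (by omega) (by omega) hc
  · exact pair_isDipath hvu (kne _ _ (by omega) (by omega) (by omega))
  · -- P3 dipath from v to yi
    have := seg_isDipath e hC (iv + ((0:ℕ) : ZMod n)) (l := K + mi) (k := k) (by omega) (by omega)
    rw [add_assoc, ← Nat.cast_add, (show 0 + (K + mi) = K + mi by omega)] at this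
    exact this
  · exact pair_isDipath hai (kne _ _ hWn (by omega) (by omega))
  · -- P1 ∩ P2 ⊆ {b}
    intro y hy1 hy2
    obtain ⟨c1, hn1, hr1, rfl⟩ := hmem1 y hy1
    obtain ⟨c2, hn2, hr2, heq⟩ := hmem2 _ hy2
    have := key c1 c2 hn1 hn2 heq
    have : c1 = U := by omega
    rw [this]
  · -- P1 ∩ P3 = ∅
    intro y hy1 hy3
    obtain ⟨c1, hn1, hr1, rfl⟩ := hmem1 y hy1
    obtain ⟨c2, hn2, hr2, heq⟩ := hmem3 _ hy3
    have := key c1 c2 hn1 hn2 heq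
    omega
  · -- P1 ∩ P4 ⊆ {a}
    intro y hy1 hy4
    obtain ⟨c1, hn1, hr1, rfl⟩ := hmem1 y hy1
    obtain ⟨c2, hn2, hr2, heq⟩ := hmem4 _ hy4
    have := key c1 c2 hn1 hn2 heq
    have : c1 = W := by omega
    rw [this]
  · -- P2 ∩ P3 ⊆ {c}
    intro y hy2 hy3
    obtain ⟨c1, hn1, hr1, rfl⟩ := hmem2 y hy2
    obtain ⟨c2, hn2, hr2, heq⟩ := hmem3 _ hy3
    have := key c1 c2 hn1 hn2 heq
    have : c1 = 0 := by omega
    rw [this]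
  · -- P2 ∩ P4 = ∅
    intro y hy2 hy4
    obtain ⟨c1, hn1, hr1, rfl⟩ := hmem2 y hy2
    obtain ⟨c2, hn2, hr2, heq⟩ := hmem4 _ hy4
    have := key c1 c2 hn1 hn2 heq
    omega
  · -- P3 ∩ P4 ⊆ {d}
    intro y hy3 hy4
    obtain ⟨c1, hn1, hr1, rfl⟩ := hmem3 y hy3
    obtain ⟨c2, hn2, hr2, heq⟩ := hmem4 _ hy4
    have := key c1 c2 hn1 hn2 heq
    have : c1 = K + mi := by omega
    rw [this]

end Construct

section Construct2
variable {V : Type*} {n : ℕ} [NeZero n] (e : ZMod n ≃ V) {A : V → V → Prop}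

/-- The construction when two arcs come into `w` (position `W`) from positions
`K+mi` and `K+mj`. -/
lemma constructIN (hC : ∀ z : ZMod n, A (e z) (e (z+1)))
    (iv : ZMod n) (k K U W mi mj : ℕ)
    (hkK : k ≤ K + 1)
    (hmi : 0 < mi) (hij : mi < mj) (hjU : mj + 2*K < U)
    (hUW : U < W) (hWn : W < n)
    (hvu : A (e (iv + ((0:ℕ) : ZMod n))) (e (iv + ((U:ℕ) : ZMod n))))
    (hai : A (e (iv + ((K+mi : ℕ) : ZMod n))) (e (iv + ((W:ℕ) : ZMod n))))
    (haj : A (e (iv + ((K+mj : ℕ) : ZMod n))) (e (iv + ((W:ℕ) : ZMod n)))) :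
    HasC4Subdivision A k 1 k 1 := by
  have key : ∀ (c1 c2 : ℕ), c1 < n → c2 < n →
      e (iv + (c1 : ZMod n)) = e (iv + (c2 : ZMod n)) → c1 = c2 :=
    fun c1 c2 h1 h2 h => e_inj e iv h1 h2 h
  have kne : ∀ (c1 c2 : ℕ), c1 < n → c2 < n → c1 ≠ c2 →
      e (iv + (c1 : ZMod n)) ≠ e (iv + (c2 : ZMod n)) :=
    fun c1 c2 h1 h2 hne h => hne (key c1 c2 h1 h2 h)
  set P1 : List V := seg e (iv + ((0:ℕ) : ZMod n)) (K + mi) ++ [e (iv + ((W:ℕ) : ZMod n))]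
    with hP1
  set P2 : List V := [e (iv + ((K+mj : ℕ) : ZMod n)), e (iv + ((W:ℕ) : ZMod n))] with hP2
  set P3 : List V := seg e (iv + ((K+mj : ℕ) : ZMod n)) (U - (K+mj)) with hP3
  set P4 : List V := [e (iv + ((0:ℕ) : ZMod n)), e (iv + ((U:ℕ) : ZMod n))] with hP4
  have hmem1 : ∀ y ∈ P1, ∃ c, c < n ∧ (c = W ∨ c ≤ K + mi) ∧
      y = e (iv + (c : ZMod n)) := by
    intro y hy
    rcases List.mem_append.mp hy with hy' | hy'
    · obtain ⟨c, h1, h2, rfl⟩ := (mem_seg' e).mp hy'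
      exact ⟨c, by omega, Or.inr (by omega), rfl⟩
    · rw [List.mem_singleton] at hy'
      exact ⟨W, hWn, Or.inl rfl, hy'⟩
  have hmem2 : ∀ y ∈ P2, ∃ c, c < n ∧ (c = K + mj ∨ c = W) ∧
      y = e (iv + (c : ZMod n)) := by
    intro y hy
    rcases List.mem_pair.mp hy with rfl | rfl
    · exact ⟨K + mj, by omega, Or.inl rfl, rfl⟩
    · exact ⟨W, hWn, Or.inr rfl, rfl⟩
  have hmem3 : ∀ y ∈ P3, ∃ c, c < n ∧ (K + mj ≤ c ∧ c ≤ U) ∧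
      y = e (iv + (c : ZMod n)) := by
    intro y hy
    obtain ⟨c, h1, h2, rfl⟩ := (mem_seg' e).mp hy
    exact ⟨c, by omega, ⟨h1, by omega⟩, rfl⟩
  have hmem4 : ∀ y ∈ P4, ∃ c, c < n ∧ (c = 0 ∨ c = U) ∧ y = e (iv + (c : ZMod n)) := by
    intro y hy
    rcases List.mem_pair.mp hy with rfl | rfl
    · exact ⟨0, by omega, Or.inl rfl, rfl⟩
    · exact ⟨U, by omega, Or.inr rfl, rfl⟩
  refine ⟨e (iv + ((0:ℕ) : ZMod n)), e (iv + ((W:ℕ) : ZMod n)), e (iv + ((K+mj : ℕ) : ZMod n)),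
    e (iv + ((U:ℕ) : ZMod n)), P1, P2, P3, P4,
    kne _ _ (by omega) hWn (by omega), kne _ _ (by omega) (by omega) (by omega),
    kne _ _ (by omega) (by omega) (by omega), kne _ _ hWn (by omega) (by omega),
    kne _ _ hWn (by omega) (by omega), kne _ _ (by omega) (by omega) (by omega),
    ?_, ?_, ?_, ?_, ?_, ?_, ?_, ?_, ?_, ?_⟩
  · -- P1 : v → w, length ≥ k
    have harc : A (e (iv + ((0:ℕ) : ZMod n) + ((K + mi : ℕ) : ZMod n)))
        (e (iv + ((W:ℕ) : ZMod n))) := by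
      rw [add_assoc, ← Nat.cast_add, (show 0 + (K + mi) = K + mi by omega)]
      exact hai
    have hnm : e (iv + ((W:ℕ) : ZMod n)) ∉ seg e (iv + ((0:ℕ) : ZMod n)) (K + mi) := by
      intro hmem
      obtain ⟨c, h1, h2, hc⟩ := (mem_seg' e).mp hmem
      exact kne W c hWn (by omega) (by omega) hc
    exact seg_snoc_isDipath e hC (k := k) harc hnm (by omega) (by omega)
  · exact pair_isDipath haj (kne _ _ (by omega) hWn (by omega))
  · -- P3 : yj → u
    have := seg_isDipath e hC (iv + ((K+mj : ℕ) : ZMod n)) (l := U - (K + mj)) (k := k)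
      (by omega) (by omega)
    rwa [add_assoc, ← Nat.cast_add, (show K + mj + (U - (K+mj)) = U by omega)] at this
  · exact pair_isDipath hvu (kne _ _ (by omega) (by omega) (by omega))
  · intro y hy1 hy2
    obtain ⟨c1, hn1, hr1, rfl⟩ := hmem1 y hy1
    obtain ⟨c2, hn2, hr2, heq⟩ := hmem2 _ hy2
    have := key c1 c2 hn1 hn2 heq
    have : c1 = W := by omega
    rw [this]
  · intro y hy1 hy3
    obtain ⟨c1, hn1, hr1, rfl⟩ := hmem1 y hy1
    obtain ⟨c2, hn2, hr2, heq⟩ := hmem3 _ hy3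
    have := key c1 c2 hn1 hn2 heq
    omega
  · intro y hy1 hy4
    obtain ⟨c1, hn1, hr1, rfl⟩ := hmem1 y hy1
    obtain ⟨c2, hn2, hr2, heq⟩ := hmem4 _ hy4
    have := key c1 c2 hn1 hn2 heq
    have : c1 = 0 := by omega
    rw [this]
  · intro y hy2 hy3
    obtain ⟨c1, hn1, hr1, rfl⟩ := hmem2 y hy2
    obtain ⟨c2, hn2, hr2, heq⟩ := hmem3 _ hy3
    have := key c1 c2 hn1 hn2 heq
    have : c1 = K + mj := by omega
    rw [this]
  · intro y hy2 hy4
    obtain ⟨c1, hn1, hr1, rfl⟩ := hmem2 y hy2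
    obtain ⟨c2, hn2, hr2, heq⟩ := hmem4 _ hy4
    have := key c1 c2 hn1 hn2 heq
    omega
  · intro y hy3 hy4
    obtain ⟨c1, hn1, hr1, rfl⟩ := hmem3 y hy3
    obtain ⟨c2, hn2, hr2, heq⟩ := hmem4 _ hy4
    have := key c1 c2 hn1 hn2 heq
    have : c1 = U := by omega
    rw [this]

end Construct2

/-- Let `D` be a `C(k,1,k,1)`-subdivision-free digraph with a Hamiltonian directed
cycle `C` (encoded by the bijection `e : ZMod n ≃ V` with consecutive arcs).
Let `u, v, w, x, x'` be vertices such that `uv ∈ E(G(D)) \ E(C)`, `w ∈ C]u,v[`,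
and `x, x' ∈ C]v,u[` with `C[v,x]` and `C[x',u]` having exactly `k` vertices each.
If `(v,u)` is an arc of `D`, then `w` has at most `2` neighbors in `G(D)`
among the vertices of `C]x,x'[`. -/
theorem neighbors_in_open_arc_le_two
    {V : Type*} [Fintype V] (A : V → V → Prop) (hirr : ∀ v : V, ¬ A v v)
    (k : ℕ) (hk : 0 < k)
    (hno : ¬ HasC4Subdivision A k 1 k 1)
    (n : ℕ) (hn : 2 ≤ n) (e : ZMod n ≃ V)
    (hC : ∀ i : ZMod n, A (e i) (e (i + 1)))
    (u v w x x' : V) (iu iv : ZMod n)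
    (hu : u = e iu) (hv : v = e iv)
    (hedge : (underlying A).Adj u v)
    (hnotC : iv ≠ iu + 1 ∧ iu ≠ iv + 1)
    (hw : ∃ j : ℕ, 0 < j ∧ j < (iv - iu).val ∧ w = e (iu + (j : ZMod n)))
    (hx : x = e (iv + ((k - 1 : ℕ) : ZMod n)))
    (hx' : x' = e (iu - ((k - 1 : ℕ) : ZMod n)))
    (hxin : 0 < k - 1 ∧ k - 1 < (iu - iv).val)
    (horder : 2 * (k - 1) ≤ (iu - iv).val)
    (hvu : A v u) :
    {y : V | (underlying A).Adj w y ∧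
        ∃ m : ℕ, 0 < m ∧
          m < ((iu - ((k - 1 : ℕ) : ZMod n)) - (iv + ((k - 1 : ℕ) : ZMod n))).val ∧
          y = e (iv + ((k - 1 : ℕ) : ZMod n) + (m : ZMod n))}.ncard ≤ 2 := by
  haveI : NeZero n := ⟨by omega⟩
  set K : ℕ := k - 1 with hKdef
  set U : ℕ := (iu - iv).val with hUdef
  have hUn : U < n := ZMod.val_lt _
  have huvne : iu ≠ iv := by
    intro h
    exact hedge.ne (by rw [hu, hv, h])
  have hsubne : iu - iv ≠ 0 := sub_ne_zero.mpr huvne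
  have hU0 : U ≠ 0 := fun h => hsubne ((ZMod.val_eq_zero _).mp h)
  have hiu : iu = iv + ((U : ℕ) : ZMod n) := by
    have h1 : ((U : ℕ) : ZMod n) = iu - iv := by
      rw [hUdef, ZMod.natCast_val, ZMod.cast_id]
    rw [h1]; ring
  have hK1 : 0 < K := hxin.1
  have hKU : K < U := hxin.2
  have h2K : 2 * K ≤ U := horder
  -- value of the arc length bound
  have hMval : ((iu - ((k - 1 : ℕ) : ZMod n)) - (iv + ((k - 1 : ℕ) : ZMod n))).val
      = U - 2 * K := by
    have e1 : (iu - ((k-1 : ℕ) : ZMod n)) - (iv + ((k-1 : ℕ) : ZMod n))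
        = ((U : ℕ) : ZMod n) - ((2 * K : ℕ) : ZMod n) := by
      rw [hiu]; push_cast; rw [hKdef]; ring
    have e2 : ((U : ℕ) : ZMod n) - ((2 * K : ℕ) : ZMod n) = ((U - 2 * K : ℕ) : ZMod n) := by
      rw [Nat.cast_sub h2K]
    rw [e1, e2, ZMod.val_cast_of_lt (by omega)]
  -- position of w
  have hnU : (iv - iu).val = n - U := by
    have h1 : iv - iu = -(iu - iv) := by ring
    rw [h1, ZMod.neg_val, if_neg hsubne]
  obtain ⟨j, hj0, hjlt, hwj⟩ := hw
  rw [hnU] at hjlt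
  set W : ℕ := U + j with hWdef
  have hUW : U < W := by omega
  have hWn : W < n := by omega
  have hwW : w = e (iv + ((W : ℕ) : ZMod n)) := by
    rw [hwj, hiu, add_assoc, ← Nat.cast_add]
  -- the chord in normalized form
  have hvu' : A (e (iv + ((0:ℕ) : ZMod n))) (e (iv + ((U:ℕ) : ZMod n))) := by
    have h0 : iv + ((0:ℕ) : ZMod n) = iv := by norm_num
    rw [h0, ← hiu, ← hu, ← hv]
    exact hvu
  have hk1 : k ≤ K + 1 := by omega
  -- two same-direction arcs give a contradiction
  have pairSame : ∀ ma mb : ℕ, 0 < ma → 0 < mb → ma ≠ mb →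
      ma < U - 2*K → mb < U - 2*K →
      ((A (e (iv + ((W:ℕ) : ZMod n))) (e (iv + ((K+ma : ℕ) : ZMod n))) ∧
        A (e (iv + ((W:ℕ) : ZMod n))) (e (iv + ((K+mb : ℕ) : ZMod n)))) ∨
       (A (e (iv + ((K+ma : ℕ) : ZMod n))) (e (iv + ((W:ℕ) : ZMod n))) ∧
        A (e (iv + ((K+mb : ℕ) : ZMod n))) (e (iv + ((W:ℕ) : ZMod n))))) → False := by
    intro ma mb hma hmb hne hmaU hmbU hdir
    rcases hne.lt_or_gt with hlt | hlt
    · rcases hdir with ⟨h1, h2⟩ | ⟨h1, h2⟩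
      · exact hno (constructOUT e hC iv k K U W ma mb hk1 hma hlt (by omega) hUW hWn hvu' h1 h2)
      · exact hno (constructIN e hC iv k K U W ma mb hk1 hma hlt (by omega) hUW hWn hvu' h1 h2)
    · rcases hdir with ⟨h1, h2⟩ | ⟨h1, h2⟩
      · exact hno (constructOUT e hC iv k K U W mb ma hk1 hmb hlt (by omega) hUW hWn hvu' h2 h1)
      · exact hno (constructIN e hC iv k K U W mb ma hk1 hmb hlt (by omega) hUW hWn hvu' h2 h1)
  by_contra hcon
  push_neg at hcon
  obtain ⟨t, hts, ht3⟩ := Set.exists_subset_card_eq (show 3 ≤ _ from hcon)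
  rw [Set.ncard_eq_three] at ht3
  obtain ⟨y1, y2, y3, h12, h13, h23, rfl⟩ := ht3
  have hy1 := hts (show y1 ∈ ({y1, y2, y3} : Set V) by simp)
  have hy2 := hts (show y2 ∈ ({y1, y2, y3} : Set V) by simp)
  have hy3 := hts (show y3 ∈ ({y1, y2, y3} : Set V) by simp)
  have hMval' : ((iu - (K : ZMod n)) - (iv + (K : ZMod n))).val = U - 2 * K := hMval
  simp only [Set.mem_setOf_eq, hMval, hMval'] at hy1 hy2 hy3
  obtain ⟨hadj1, m1, hm10, hm1M, hye1⟩ := hy1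
  obtain ⟨hadj2, m2, hm20, hm2M, hye2⟩ := hy2
  obtain ⟨hadj3, m3, hm30, hm3M, hye3⟩ := hy3
  rw [add_assoc, ← Nat.cast_add] at hye1 hye2 hye3
  -- the m's are distinct
  have hm12 : m1 ≠ m2 := fun h => h12 (by rw [hye1, hye2, h])
  have hm13 : m1 ≠ m3 := fun h => h13 (by rw [hye1, hye3, h])
  have hm23 : m2 ≠ m3 := fun h => h23 (by rw [hye2, hye3, h])
  -- adjacency directions
  rw [hwW, hye1] at hadj1
  rw [hwW, hye2] at hadj2
  rw [hwW, hye3] at hadj3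
  rcases (show _ ∧ (_ ∨ _) from hadj1).2 with a1 | b1 <;> rcases (show _ ∧ (_ ∨ _) from hadj2).2 with a2 | b2 <;> rcases (show _ ∧ (_ ∨ _) from hadj3).2 with a3 | b3
  · exact pairSame m1 m2 hm10 hm20 hm12 hm1M hm2M (Or.inl ⟨a1, a2⟩)
  · exact pairSame m1 m2 hm10 hm20 hm12 hm1M hm2M (Or.inl ⟨a1, a2⟩)
  · exact pairSame m1 m3 hm10 hm30 hm13 hm1M hm3M (Or.inl ⟨a1, a3⟩)
  · exact pairSame m2 m3 hm20 hm30 hm23 hm2M hm3M (Or.inr ⟨b2, b3⟩)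
  · exact pairSame m2 m3 hm20 hm30 hm23 hm2M hm3M (Or.inl ⟨a2, a3⟩)
  · exact pairSame m1 m3 hm10 hm30 hm13 hm1M hm3M (Or.inr ⟨b1, b3⟩)
  · exact pairSame m1 m2 hm10 hm20 hm12 hm1M hm2M (Or.inr ⟨b1, b2⟩)
  · exact pairSame m1 m2 hm10 hm20 hm12 hm1M hm2M (Or.inr ⟨b1, b2⟩)
end

section
/- Every digraph D that has a spanning out-tree also has a final spanning out-tree, i.e., a spanning out-tree T such that for every backward arc (x,y) of D with respect to T, the vertex y is an ancestor of x in T. -/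
open Classical

variable {V : Type*}

namespace SpanningOutTree

variable {A : V → V → Prop}

lemma level_iterate (T : SpanningOutTree A) (v : V) :
    ∀ i, i < T.level v → T.level (T.parent^[i] v) + i = T.level v := by
  intro i
  induction i with
  | zero => simp
  | succ i ih =>
    intro h
    have h1 : i < T.level v := Nat.lt_of_succ_lt h
    have h2 := ih h1
    have hne : T.parent^[i] v ≠ T.root := by
      intro he
      rw [he, T.level_root] at h2
      omega
    have h3 := T.level_parent _ hne
    rw [Function.iterate_succ_apply']
    omega

lemma level_le_card [Fintype V] (T : SpanningOutTree A) (v : V) :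
    T.level v ≤ Fintype.card V := by
  have hinj : Function.Injective (fun i : Fin (T.level v) => T.parent^[(i : ℕ)] v) := by
    intro i j hij
    have hi := T.level_iterate v i i.2
    have hj := T.level_iterate v j j.2
    simp only at hij
    rw [hij] at hi
    ext
    omega
  simpa using Fintype.card_le_of_injective _ hinj

lemma anc_root (T : SpanningOutTree A) (x : V) : T.Anc T.root x := by
  have key : ∀ n x, T.level x ≤ n → T.Anc T.root x := by
    intro n
    induction n with
    | zero =>
      intro x hx
      by_cases h : x = T.root
      · exact ⟨0, h⟩
      · have := T.level_parent x h; omega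
    | succ n ih =>
      intro x hx
      by_cases h : x = T.root
      · exact ⟨0, h⟩
      · have hl := T.level_parent x h
        obtain ⟨m, hm⟩ := ih (T.parent x) (by omega)
        exact ⟨m + 1, by rw [Function.iterate_succ_apply]; exact hm⟩
  exact key (T.level x) x le_rfl

lemma anc_parent_of_anc {T : SpanningOutTree A} {y v : V} (h : T.Anc y v) (hne : v ≠ y) :
    T.Anc y (T.parent v) := by
  obtain ⟨n, hn⟩ := h
  cases n with
  | zero => exact absurd hn hne
  | succ m => exact ⟨m, by rwa [Function.iterate_succ_apply] at hn⟩

lemma anc_of_anc_parent {T : SpanningOutTree A} {y v : V} (h : T.Anc y (T.parent v)) :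
    T.Anc y v := by
  obtain ⟨m, hm⟩ := h
  exact ⟨m + 1, by rw [Function.iterate_succ_apply]; exact hm⟩

lemma improve [Fintype V] (T : SpanningOutTree A) (hnf : ¬ T.IsFinal) :
    ∃ T' : SpanningOutTree A, (∑ v, T.level v) < ∑ v, T'.level v := by
  rw [IsFinal] at hnf
  push_neg at hnf
  obtain ⟨x, y, hA, hlev, hnanc⟩ := hnf
  set d : ℕ := T.level x + 1 - T.level y with hd
  have hyroot : y ≠ T.root := by
    intro h
    exact hnanc (h ▸ T.anc_root x)
  have hxy : x ≠ y := by
    intro h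
    exact hnanc ⟨0, h⟩
  have hyanc_root : ¬ T.Anc y T.root := by
    rintro ⟨n, hn⟩
    rw [Function.iterate_fixed T.parent_root] at hn
    exact hyroot hn.symm
  refine ⟨⟨T.root, Function.update T.parent y x,
    fun v => if T.Anc y v then T.level v + d else T.level v, ?_, ?_, ?_, ?_⟩, ?_⟩
  · rw [Function.update_of_ne (Ne.symm hyroot)]
    exact T.parent_root
  · intro v hv
    by_cases h : v = y
    · subst h
      rw [Function.update_self]
      exact hA
    · rw [Function.update_of_ne h]
      exact T.parent_arc v hv
  · simp only [if_neg hyanc_root]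
    exact T.level_root
  · intro v hv
    by_cases h : v = y
    · subst h
      rw [Function.update_self]
      beta_reduce
      split_ifs with h1
      · omega
      · exact absurd ⟨0, rfl⟩ h1
    · rw [Function.update_of_ne h]
      by_cases ha : T.Anc y v
      · have hpa : T.Anc y (T.parent v) := anc_parent_of_anc ha h
        simp only [if_pos ha, if_pos hpa]
        have := T.level_parent v hv
        omega
      · have hpa : ¬ T.Anc y (T.parent v) := fun hh => ha (anc_of_anc_parent hh)
        simp only [if_neg ha, if_neg hpa]
        exact T.level_parent v hv
  · simp only
    apply Finset.sum_lt_sum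
    · intro i _
      split <;> omega
    · refine ⟨y, Finset.mem_univ y, ?_⟩
      split_ifs with h1
      · omega
      · exact absurd ⟨0, rfl⟩ h1

end SpanningOutTree

/-- Every digraph having a spanning out-tree has a final spanning out-tree. -/
theorem exists_final_spanning_out_tree
    {V : Type*} [Fintype V] (A : V → V → Prop) (hirr : ∀ v : V, ¬ A v v)
    (T : SpanningOutTree A) :
    ∃ T' : SpanningOutTree A, T'.IsFinal := by
  by_contra hc
  push_neg at hc
  set S : Set ℕ := {n | ∃ T' : SpanningOutTree A, (∑ v, T'.level v) = n} with hS
  have hne : S.Nonempty := ⟨_, T, rfl⟩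
  have hbdd : BddAbove S := by
    refine ⟨Fintype.card V * Fintype.card V, ?_⟩
    rintro n ⟨T', rfl⟩
    calc ∑ v, T'.level v ≤ ∑ _v : V, Fintype.card V :=
          Finset.sum_le_sum (fun v _ => T'.level_le_card v)
      _ = Fintype.card V * Fintype.card V := by
          simp [Finset.sum_const, Finset.card_univ]
  obtain ⟨T₀, hT₀⟩ := Nat.sSup_mem hne hbdd
  obtain ⟨T', hT'⟩ := T₀.improve (hc T₀)
  have hle : ∑ v, T'.level v ≤ sSup S := le_csSup hbdd ⟨T', rfl⟩
  omega
end

section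
/- For any integer k ≥ 4, if G is a k-wheel-free graph, then G is (k+1)-colorable. -/
variable {V : Type*}

/-- `G` contains a `k`-wheel as a subgraph: a cycle `C` together with a vertex `u`
not on `C` having at least `k` neighbors on `C`. -/
def HasKWheel (G : SimpleGraph V) (k : ℕ) : Prop :=
  ∃ (m : ℕ) (f : ZMod m → V) (u : V),
    3 ≤ m ∧ Function.Injective f ∧ (∀ i : ZMod m, G.Adj (f i) (f (i + 1))) ∧
    u ∉ Set.range f ∧ k ≤ {v : V | v ∈ Set.range f ∧ G.Adj u v}.ncard

section Key

set_option linter.unusedSectionVars false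

variable [Fintype V] {G : SimpleGraph V} {k : ℕ}

variable [Fintype V] {G : SimpleGraph V} {k : ℕ}

/-- Build a `k`-wheel from a path `q 0, q 1, ..., q (L-1)`, a chord `q s — q b`,
and a set `T` of at least `k` positions strictly between `s` and `b` (inclusive of `b`)
at which the center `q 0` has neighbors. -/
lemma wheel_exists (q : ℕ → V) (L : ℕ)
    (hinj : ∀ a < L, ∀ b < L, q a = q b → a = b)
    (hadj : ∀ a, a + 1 < L → G.Adj (q a) (q (a + 1)))
    (s b : ℕ) (hs1 : 1 ≤ s) (hsb : s + 2 ≤ b) (hbL : b < L)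
    (hchord : G.Adj (q s) (q b))
    (T : Finset ℕ) (hTsub : ∀ i ∈ T, s + 1 ≤ i ∧ i ≤ b)
    (hTadj : ∀ i ∈ T, G.Adj (q 0) (q i))
    (hTcard : k ≤ T.card) : HasKWheel G k := by
  classical
  set M : ℕ := b - s + 1 with hM
  have hM3 : 3 ≤ M := by omega
  haveI : NeZero M := ⟨by omega⟩
  refine ⟨M, fun i => q (s + i.val), q 0, hM3, ?_, ?_, ?_, ?_⟩
  · intro i j hij
    have hi : i.val < M := ZMod.val_lt i
    have hj : j.val < M := ZMod.val_lt j
    have : s + i.val = s + j.val := hinj _ (by omega) _ (by omega) hij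
    have : i.val = j.val := by omega
    exact ZMod.val_injective M this
  · intro i
    show G.Adj (q (s + i.val)) (q (s + (i+1).val))
    have hi : i.val < M := ZMod.val_lt i
    have h1 : (1 : ZMod M).val = 1 := by
      haveI : Fact (1 < M) := ⟨by omega⟩
      exact ZMod.val_one M
    have hadd : (i + 1).val = (i.val + 1) % M := by rw [ZMod.val_add, h1]
    rcases lt_or_ge (i.val + 1) M with h | h
    · rw [hadd, Nat.mod_eq_of_lt h]
      exact hadj _ (by omega)
    · have hie : i.val = M - 1 := by omega
      have : (i.val + 1) % M = 0 := by
        have : i.val + 1 = M := by omega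
        simp [this]
      rw [hadd, this]
      have : s + i.val = b := by omega
      rw [this]
      simpa using hchord.symm
  · rintro ⟨i, hi⟩
    simp only at hi
    have hiv : i.val < M := ZMod.val_lt i
    have : s + i.val = 0 := hinj _ (by omega) _ (by omega) hi
    omega
  · have himg : (↑(T.image q) : Set V) ⊆ {v : V | v ∈ Set.range (fun i : ZMod M => q (s + i.val)) ∧ G.Adj (q 0) v} := by
      intro v hv
      simp only [Finset.coe_image, Set.mem_image, Finset.mem_coe] at hv
      obtain ⟨i, hiT, rfl⟩ := hv
      obtain ⟨hi1, hi2⟩ := hTsub i hiT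
      constructor
      · refine ⟨((i - s : ℕ) : ZMod M), ?_⟩
        have : ((i - s : ℕ) : ZMod M).val = i - s := ZMod.val_cast_of_lt (by omega)
        simp only [this]
        congr 1
        omega
      · exact hTadj i hiT
    have hcard : (T.image q).card = T.card := by
      apply Finset.card_image_of_injOn
      intro x hx y hy hxy
      have hx' := hTsub x hx
      have hy' := hTsub y hy
      exact hinj _ (by omega) _ (by omega) hxy
    calc (k : ℕ) ≤ T.card := hTcard
      _ = (T.image q).card := hcard.symm
      _ = (↑(T.image q) : Set V).ncard := (Set.ncard_coe_finset _).symm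
      _ ≤ _ := Set.ncard_le_ncard himg (Set.toFinite _)


lemma key (hk3 : 3 ≤ k) (hdeg : ∀ v : V, k + 1 ≤ (G.neighborSet v).ncard) :
    ∀ μ : ℕ, ∀ (q : ℕ → V) (L f : ℕ), 1 ≤ L →
    (∀ a < L, ∀ b < L, q a = q b → a = b) →
    (∀ a, a + 1 < L → G.Adj (q a) (q (a + 1))) →
    (∀ b, b < L → G.Adj (q 0) (q b) → b ≤ f) →
    (Fintype.card V - L) * (Fintype.card V + 2) + f ≤ μ →
    HasKWheel G k := by
  classical
  intro μ
  induction μ using Nat.strong_induction_on with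
  | _ μ ih =>
  intro q L f hL hinj hadj hf hμ
  set n := Fintype.card V with hn
  -- the path has at most n vertices
  have hLn : L ≤ n := by
    have : (Finset.range L).card ≤ (Finset.univ : Finset V).card := by
      rw [← Finset.card_image_of_injOn (f := q) (fun x hx y hy h =>
        hinj x (Finset.mem_range.1 hx) y (Finset.mem_range.1 hy) h)]
      exact Finset.card_le_univ _
    simpa using this
  by_cases hext : ∃ y : V, G.Adj (q 0) y ∧ ∀ a, a < L → q a ≠ y
  · -- extension case
    obtain ⟨y, hy, hyQ⟩ := hext
    set q' : ℕ → V := fun a => if a = 0 then y else q (a - 1) with hq'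
    have hq'0 : q' 0 = y := rfl
    have hq's : ∀ a, q' (a + 1) = q a := fun a => by simp [hq']
    have hinj' : ∀ a < L + 1, ∀ b < L + 1, q' a = q' b → a = b := by
      intro a ha b hb hab
      match a, b with
      | 0, 0 => rfl
      | 0, b + 1 => rw [hq'0, hq's] at hab; exact absurd hab.symm (hyQ b (by omega))
      | a + 1, 0 => rw [hq'0, hq's] at hab; exact absurd hab (hyQ a (by omega))
      | a + 1, b + 1 =>
        rw [hq's, hq's] at hab
        have := hinj a (by omega) b (by omega) hab; omega
    have hadj' : ∀ a, a + 1 < L + 1 → G.Adj (q' a) (q' (a + 1)) := by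
      intro a ha
      match a with
      | 0 => rw [hq'0, hq's]; exact hy.symm
      | a + 1 => rw [hq's, hq's]; exact hadj a (by omega)
    have hLn' : L + 1 ≤ n := by
      have : (Finset.range (L+1)).card ≤ (Finset.univ : Finset V).card := by
        rw [← Finset.card_image_of_injOn (f := q') (fun x hx y hy h =>
          hinj' x (Finset.mem_range.1 hx) y (Finset.mem_range.1 hy) h)]
        exact Finset.card_le_univ _
      simpa using this
    refine ih ((n - (L+1)) * (n + 2) + L) ?_ q' (L+1) L (by omega) hinj' hadj'
      (fun b hb _ => by omega) le_rfl
    have e1 : (n - L) * (n + 2) = (n - (L+1)) * (n + 2) + (n + 2) := by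
      have e0 : n - L = (n - (L+1)) + 1 := by omega
      rw [e0, Nat.add_mul, one_mul]
    omega
  · -- saturated case
    push_neg at hext
    have hsat : ∀ y : V, G.Adj (q 0) y → ∃ a, a < L ∧ q a = y := by
      intro y hy
      obtain ⟨a, ha, ha2⟩ := hext y hy
      exact ⟨a, ha, ha2⟩
    set I : Finset ℕ := (Finset.range L).filter (fun b => G.Adj (q 0) (q b)) with hI
    have hmemI : ∀ i, i ∈ I ↔ i < L ∧ G.Adj (q 0) (q i) := by
      intro i; simp [hI]
    have hIimg : (↑(I.image q) : Set V) = G.neighborSet (q 0) := by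
      ext y
      simp only [Finset.coe_image, Set.mem_image, Finset.mem_coe,
        SimpleGraph.mem_neighborSet]
      constructor
      · rintro ⟨i, hi, rfl⟩; exact ((hmemI i).1 hi).2
      · intro hy
        obtain ⟨a, ha, rfl⟩ := hsat y hy
        exact ⟨a, (hmemI a).2 ⟨ha, hy⟩, rfl⟩
    have hIcard : k + 1 ≤ I.card := by
      have h1 : I.card = (I.image q).card := by
        rw [Finset.card_image_of_injOn]
        intro x hx y hy h
        exact hinj x ((hmemI x).1 hx).1 y ((hmemI y).1 hy).1 h
      have h2 : (G.neighborSet (q 0)).ncard = (I.image q).card := by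
        rw [← hIimg, Set.ncard_coe_finset]
      have := hdeg (q 0)
      omega
    have hIne : I.Nonempty := Finset.card_pos.1 (by omega)
    set i1 : ℕ := I.min' hIne with hi1
    have hi1I : i1 ∈ I := I.min'_mem hIne
    have hIne2 : (I.erase i1).Nonempty := by
      rw [← Finset.card_pos, Finset.card_erase_of_mem hi1I]; omega
    set i2 : ℕ := (I.erase i1).min' hIne2 with hi2
    have hi2I' : i2 ∈ I.erase i1 := Finset.min'_mem _ hIne2
    have hi2I : i2 ∈ I := Finset.mem_of_mem_erase hi2I'
    set j : ℕ := I.max' hIne with hj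
    have hjI : j ∈ I := I.max'_mem hIne
    have h0I : (0 : ℕ) ∉ I := by
      intro h0
      exact G.irrefl ((hmemI 0).1 h0).2
    have hi1pos : 1 ≤ i1 := by
      rcases Nat.eq_zero_or_pos i1 with h | h
      · rw [h] at hi1I; exact absurd hi1I h0I
      · exact h
    have hi2gt : i1 < i2 := by
      have h1 : i1 ≤ i2 := I.min'_le _ hi2I
      have h2 : i2 ≠ i1 := (Finset.mem_erase.1 hi2I').1
      omega
    -- there is a third element, so j > i2
    have hjgt : i2 < j := by
      have hne3 : ((I.erase i1).erase i2).Nonempty := by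
        rw [← Finset.card_pos, Finset.card_erase_of_mem hi2I', Finset.card_erase_of_mem hi1I]
        omega
      obtain ⟨x, hx⟩ := hne3
      have hx2 : x ≠ i2 := (Finset.mem_erase.1 hx).1
      have hx1 : x ∈ I.erase i1 := Finset.mem_of_mem_erase hx
      have : i2 ≤ x := Finset.min'_le _ _ hx1
      have hxI : x ∈ I := Finset.mem_of_mem_erase hx1
      have : x ≤ j := I.le_max' _ hxI
      omega
    have hjL : j < L := ((hmemI j).1 hjI).1
    have hjf : j ≤ f := hf j hjL ((hmemI j).1 hjI).2
    set s : ℕ := i2 - 1 with hs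
    by_cases hwin : ∃ b, j ≤ b ∧ b < L ∧ G.Adj (q s) (q b)
    · obtain ⟨b, hjb, hbL, hchord⟩ := hwin
      refine wheel_exists q L hinj hadj s b (by omega) (by omega) hbL hchord
        (I.erase i1) ?_ ?_ ?_
      · intro i hi
        have hiI : i ∈ I := Finset.mem_of_mem_erase hi
        have h1 : i2 ≤ i := Finset.min'_le _ _ hi
        have h2 : i ≤ j := I.le_max' _ hiI
        omega
      · intro i hi
        exact ((hmemI i).1 (Finset.mem_of_mem_erase hi)).2
      · rw [Finset.card_erase_of_mem hi1I]; omega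
    · -- rotation case
      push_neg at hwin
      set q' : ℕ → V := fun a => if a ≤ s then q (s - a) else q a with hq'
      have hsL : s < L := by omega
      have hq'eval : ∀ a, a ≤ s → q' a = q (s - a) := by
        intro a ha; simp [hq', ha]
      have hq'eval2 : ∀ a, s < a → q' a = q a := by
        intro a ha; simp [hq', Nat.not_le.2 ha]
      have hinj' : ∀ a < L, ∀ b < L, q' a = q' b → a = b := by
        intro a ha b hb hab
        rcases le_or_gt a s with h1 | h1 <;> rcases le_or_gt b s with h2 | h2
        · rw [hq'eval a h1, hq'eval b h2] at hab
          have := hinj _ (by omega) _ (by omega) hab; omega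
        · rw [hq'eval a h1, hq'eval2 b h2] at hab
          have := hinj _ (by omega) _ (by omega) hab; omega
        · rw [hq'eval2 a h1, hq'eval b h2] at hab
          have := hinj _ (by omega) _ (by omega) hab; omega
        · rw [hq'eval2 a h1, hq'eval2 b h2] at hab
          exact hinj _ (by omega) _ (by omega) hab
      have hadj' : ∀ a, a + 1 < L → G.Adj (q' a) (q' (a + 1)) := by
        intro a ha
        rcases lt_or_ge (a + 1) s with h1 | h1
        · rw [hq'eval a (by omega), hq'eval (a+1) (by omega)]
          have he : s - (a+1) + 1 = s - a := by omega
          have := hadj (s - (a+1)) (by omega)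
          rw [he] at this
          exact this.symm
        · rcases Nat.eq_or_lt_of_le h1 with h2 | h2
          · -- a + 1 = s
            rw [hq'eval a (by omega), hq'eval (a+1) (by omega), ← h2]
            have he : s - (a+1) + 1 = s - a := by omega
            have := hadj (s - (a+1)) (by omega)
            rw [he, ← h2] at this
            simpa using this.symm
          · rcases Nat.eq_or_lt_of_le h2 with h3 | h3
            · -- a = s
              rw [hq'eval a (by omega), hq'eval2 (a+1) (by omega)]
              have e2 : s - a = 0 := by omega
              have e3 : a + 1 = i2 := by omega
              rw [e2, e3]
              exact ((hmemI i2).1 hi2I).2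
            · rw [hq'eval2 a (by omega), hq'eval2 (a+1) (by omega)]
              exact hadj a ha
      have hf' : ∀ x, x < L → G.Adj (q' 0) (q' x) → x ≤ j - 1 := by
        intro x hx hxadj
        rw [hq'eval 0 (by omega), Nat.sub_zero] at hxadj
        rcases le_or_gt x s with h1 | h1
        · omega
        · rw [hq'eval2 x h1] at hxadj
          by_contra hcon
          exact hwin x (by omega) hx hxadj
      refine ih ((n - L) * (n + 2) + (j - 1)) (by omega) q' L (j-1) hL hinj' hadj' hf' le_rfl

end Key

lemma hasKWheel_of_induce {G : SimpleGraph V} {k : ℕ} {s : Set V}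
    (h : HasKWheel (G.induce s) k) : HasKWheel G k := by
  obtain ⟨m, f, u, hm, hf, hadj, hu, hcard⟩ := h
  refine ⟨m, fun i => (f i : V), u, hm, fun a b hab => hf (Subtype.val_injective hab),
    fun i => hadj i, ?_, ?_⟩
  · rintro ⟨i, hi⟩
    exact hu ⟨i, Subtype.val_injective hi⟩
  · have himg : (Subtype.val '' {v | v ∈ Set.range f ∧ (G.induce s).Adj u v})
        ⊆ {v : V | v ∈ Set.range (fun i => (f i : V)) ∧ G.Adj (u : V) v} := by
      rintro x ⟨y, ⟨⟨i, rfl⟩, hadj'⟩, rfl⟩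
      exact ⟨⟨i, rfl⟩, hadj'⟩
    calc (k : ℕ) ≤ {v | v ∈ Set.range f ∧ (G.induce s).Adj u v}.ncard := hcard
      _ = (Subtype.val '' {v | v ∈ Set.range f ∧ (G.induce s).Adj u v}).ncard :=
          (Set.ncard_image_of_injective _ Subtype.val_injective).symm
      _ ≤ _ := by
          haveI : NeZero m := ⟨by omega⟩
          exact Set.ncard_le_ncard himg
            (Set.Finite.subset (Set.finite_range (fun i => (f i : V))) (fun x hx => hx.1))

lemma colorable_aux {k : ℕ} (hk3 : 3 ≤ k) :
    ∀ n : ℕ, ∀ (W : Type u) (_ : Fintype W) (G : SimpleGraph W),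
      Fintype.card W ≤ n → ¬ HasKWheel G k → G.Colorable (k + 1) := by
  intro n
  induction n with
  | zero =>
    intro W _ G hcard _
    haveI : IsEmpty W := Fintype.card_eq_zero_iff.1 (le_antisymm hcard (Nat.zero_le _))
    exact ⟨SimpleGraph.Coloring.mk (fun v => (IsEmpty.false v).elim)
      (fun {v} => (IsEmpty.false v).elim)⟩
  | succ n ih =>
    intro W _ G hcard hfree
    classical
    by_cases hv : ∃ v : W, (G.neighborSet v).ncard ≤ k
    · obtain ⟨v, hv⟩ := hv
      set s : Set W := {u | u ≠ v} with hs
      have hcard' : Fintype.card s ≤ n := by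
        have : Fintype.card s < Fintype.card W :=
          Fintype.card_subtype_lt (p := fun u => u ≠ v) (x := v) (by simp)
        omega
      have hfree' : ¬ HasKWheel (G.induce s) k := fun h => hfree (hasKWheel_of_induce h)
      obtain ⟨c'⟩ := ih s inferInstance (G.induce s) hcard' hfree'
      -- pick a color unused on the neighborhood of v
      set used : Finset (Fin (k+1)) :=
        ((G.neighborSet v).toFinite.toFinset).image
          (fun w => if h : w = v then 0 else c' ⟨w, h⟩) with hused
      have husedcard : used.card ≤ k := by
        calc used.card ≤ ((G.neighborSet v).toFinite.toFinset).card := Finset.card_image_le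
          _ = (G.neighborSet v).ncard :=
              (Set.ncard_eq_toFinset_card _ (Set.toFinite _)).symm
          _ ≤ k := hv
      have : (usedᶜ : Finset (Fin (k+1))).Nonempty := by
        rw [← Finset.card_pos, Finset.card_compl]
        have : Fintype.card (Fin (k+1)) = k + 1 := Fintype.card_fin _
        omega
      obtain ⟨a, ha⟩ := this
      have haused : a ∉ used := Finset.mem_compl.1 ha
      refine ⟨SimpleGraph.Coloring.mk
        (fun w => if h : w = v then a else c' ⟨w, h⟩) ?_⟩
      intro x y hadj
      show (if h : x = v then a else c' ⟨x, h⟩) ≠ (if h : y = v then a else c' ⟨y, h⟩)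
      by_cases hx : x = v <;> by_cases hy : y = v
      · exact absurd (hx.trans hy.symm) hadj.ne
      · rw [dif_pos hx, dif_neg hy]
        intro hcon
        apply haused
        rw [hused, hcon]
        refine Finset.mem_image.2 ⟨y, ?_, ?_⟩
        · rw [Set.Finite.mem_toFinset]; exact hx ▸ hadj
        · rw [dif_neg hy]
      · rw [dif_neg hx, dif_pos hy]
        intro hcon
        apply haused
        rw [hused, ← hcon]
        refine Finset.mem_image.2 ⟨x, ?_, ?_⟩
        · rw [Set.Finite.mem_toFinset]; exact hy ▸ hadj.symm
        · rw [dif_neg hx]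
      · rw [dif_neg hx, dif_neg hy]
        exact c'.valid (by exact hadj)
    · push_neg at hv
      rcases isEmpty_or_nonempty W with hW | hW
      · exact ⟨SimpleGraph.Coloring.mk (fun v => (IsEmpty.false v).elim)
          (fun {v} => (IsEmpty.false v).elim)⟩
      · obtain ⟨v0⟩ := hW
        exfalso
        apply hfree
        refine key hk3 (fun v => hv v) ((Fintype.card W - 1) * (Fintype.card W + 2))
          (fun _ => v0) 1 0 le_rfl ?_ ?_ ?_ le_rfl
        · intro a ha b hb _; omega
        · intro a ha; omega
        · intro b hb hadj
          exact absurd hadj (G.irrefl)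

/-- For any integer `k ≥ 4`, every `k`-wheel-free graph is `(k+1)`-colorable. -/
theorem wheel_free_colorable
    {V : Type*} [Fintype V] (G : SimpleGraph V)
    (k : ℕ) (hk : 4 ≤ k) (hfree : ¬ HasKWheel G k) :
    G.chromaticNumber ≤ ((k + 1 : ℕ) : ℕ∞) := by
  have h := colorable_aux (by omega : 3 ≤ k) (Fintype.card V) V inferInstance G le_rfl hfree
  exact h.chromaticNumber_le
end

section
/- For any integer k ≥ 4, if G is a k-wheel-free graph, then G contains a vertex of degree at most k. -/
variable {V : Type*}

namespace WheelAux

open List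

/-- The global frame: a longest path `P` (as a list) of length `n`, with `t` the
largest index such that the head is adjacent to `P[t]`, maximized over all longest
paths. -/
structure Frame [Inhabited V] (G : SimpleGraph V) (k : ℕ) where
  P : List V
  n : ℕ
  t : ℕ
  hlen : P.length = n
  ht1 : 1 ≤ t
  htn : t < n
  hnd : P.Nodup
  hch : P.Chain' G.Adj
  hdeg : ∀ v : V, k + 1 ≤ (G.neighborSet v).ncard
  hlongest : ∀ l : List V, l.Nodup → l.Chain' G.Adj → l.length ≤ n
  hmax : ∀ l : List V, l.Nodup → l.Chain' G.Adj → l.length = n →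
      ∀ j : ℕ, j < n → G.Adj (l.getI 0) (l.getI j) → j ≤ t
  hA0t : G.Adj (P.getI 0) (P.getI t)

variable [Inhabited V] {G : SimpleGraph V} {k : ℕ}

/-- positional vertex function -/
noncomputable def Frame.x (F : Frame G k) : ℕ → V := fun i => F.P.getI i

lemma Frame.xinj (F : Frame G k) {i j : ℕ} (hi : i < F.n) (hj : j < F.n)
    (h : F.x i = F.x j) : i = j := by
  have hi' : i < F.P.length := by rw [F.hlen]; exact hi
  have hj' : j < F.P.length := by rw [F.hlen]; exact hj
  rw [Frame.x, Frame.x, F.P.getI_eq_getElem hi', F.P.getI_eq_getElem hj'] at h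
  have := (List.Nodup.get_inj_iff F.hnd (i := ⟨i, hi'⟩) (j := ⟨j, hj'⟩))
  simp only [List.get_eq_getElem] at this
  exact Fin.mk_eq_mk.1 (this.1 h)

lemma Frame.xadj (F : Frame G k) {i : ℕ} (hi : i + 1 < F.n) :
    G.Adj (F.x i) (F.x (i+1)) := by
  have h1 : i + 1 < F.P.length := by rw [F.hlen]; exact hi
  have h0 : i < F.P.length := Nat.lt_of_succ_lt h1
  have := List.isChain_iff_getElem.1 F.hch i (by omega)
  rw [Frame.x, Frame.x, F.P.getI_eq_getElem h0, F.P.getI_eq_getElem h1]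
  simpa using this

lemma Frame.xA0t (F : Frame G k) : G.Adj (F.x 0) (F.x F.t) := F.hA0t

end WheelAux

set_option linter.unusedSectionVars false
namespace WheelAux
open List
variable [Inhabited V] {G : SimpleGraph V} {k : ℕ}

lemma mem_take_iff {l : List V} {m : ℕ} (hm : m ≤ l.length) {v : V} :
    v ∈ l.take m ↔ ∃ i, i < m ∧ l.getI i = v := by
  constructor
  · intro hv
    obtain ⟨q, hq⟩ := List.mem_iff_get.1 hv
    have hlt : (q : ℕ) < m := lt_of_lt_of_le q.isLt (by rw [List.length_take]; omega)
    have hlt' : (q : ℕ) < l.length := lt_of_lt_of_le hlt hm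
    refine ⟨q, hlt, ?_⟩
    rw [l.getI_eq_getElem hlt', ← hq]
    simp [List.get_eq_getElem, List.getElem_take]
  · rintro ⟨i, him, hi⟩
    have hlt' : i < l.length := lt_of_lt_of_le him hm
    have hlen : i < (l.take m).length := by rw [List.length_take]; omega
    rw [List.mem_iff_get]
    refine ⟨⟨i, hlen⟩, ?_⟩
    rw [← hi, l.getI_eq_getElem hlt']
    simp [List.get_eq_getElem, List.getElem_take]

/-- `Q` is "good" if its first `t+1` entries are (set-wise) those of `P`. -/
def Frame.Good (F : Frame G k) (Q : List V) : Prop :=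
  ∀ v : V, v ∈ Q.take (F.t + 1) ↔ v ∈ F.P.take (F.t + 1)

lemma Frame.goodP (F : Frame G k) : F.Good F.P := fun _ => Iff.rfl

lemma Frame.mem_takeP (F : Frame G k) {v : V} :
    v ∈ F.P.take (F.t + 1) ↔ ∃ i, i ≤ F.t ∧ v = F.x i := by
  have h : F.t + 1 ≤ F.P.length := by rw [F.hlen]; have := F.htn; omega
  rw [mem_take_iff h]
  constructor
  · rintro ⟨i, hi, hv⟩
    refine ⟨i, by omega, ?_⟩
    rw [← hv]; rfl
  · rintro ⟨i, hi, hv⟩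
    refine ⟨i, by omega, ?_⟩
    rw [hv]; rfl

/-- Every neighbour of the head of a good longest path is among `x 0, ..., x t`. -/
lemma Frame.nbr (F : Frame G k) {Q : List V} (hnd : Q.Nodup) (hch : Q.Chain' G.Adj)
    (hlen : Q.length = F.n) (hgood : F.Good Q) {v : V} (hadj : G.Adj (Q.getI 0) v) :
    ∃ i, i ≤ F.t ∧ v = F.x i := by
  have hn0 : 0 < Q.length := by rw [hlen]; have := F.htn; omega
  have hne : Q ≠ [] := List.ne_nil_of_length_pos hn0
  have hhead : Q.head? = some (Q.getI 0) := by
    rw [List.head?_eq_getElem?, List.getElem?_eq_getElem hn0, Q.getI_eq_getElem hn0]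
  -- v must lie on Q
  have hvQ : v ∈ Q := by
    by_contra hv
    have hnd' : (v :: Q).Nodup := List.nodup_cons.2 ⟨hv, hnd⟩
    have hch' : (v :: Q).Chain' G.Adj := by
      unfold List.Chain'; rw [List.isChain_cons]
      exact ⟨fun y hy => by rw [hhead] at hy; cases hy; exact hadj.symm, hch⟩
    have := F.hlongest _ hnd' hch'
    simp only [List.length_cons, hlen] at this; omega
  obtain ⟨q, hq⟩ := List.mem_iff_get.1 hvQ
  have hqn : (q : ℕ) < F.n := by rw [← hlen]; exact q.isLt
  have hgv : Q.getI (q : ℕ) = v := by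
    rw [Q.getI_eq_getElem q.isLt, ← hq]; simp
  have hadj' : G.Adj (Q.getI 0) (Q.getI (q : ℕ)) := by rw [hgv]; exact hadj
  have hqt : (q : ℕ) ≤ F.t := F.hmax Q hnd hch hlen q hqn hadj'
  have hvtake : v ∈ Q.take (F.t + 1) := by
    rw [mem_take_iff (by rw [hlen]; have := F.htn; omega)]
    exact ⟨q, by omega, hgv⟩
  exact F.mem_takeP.1 ((hgood v).1 hvtake)

end WheelAux

set_option linter.unusedSectionVars false
namespace WheelAux
open List
variable [Inhabited V] {G : SimpleGraph V} {k : ℕ}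

/-- Pósa rotation. -/
def rot (Q : List V) (π : ℕ) : List V := (Q.take π).reverse ++ Q.drop π

lemma rot_length (Q : List V) {π : ℕ} (hπ : π ≤ Q.length) :
    (rot Q π).length = Q.length := by
  simp [rot, List.length_take, List.length_drop]; omega

lemma rot_perm (Q : List V) (π : ℕ) : (rot Q π).Perm Q := by
  have h1 : ((Q.take π).reverse ++ Q.drop π).Perm (Q.take π ++ Q.drop π) :=
    (List.reverse_perm _).append (List.Perm.refl _)
  rw [rot]; exact h1.trans (by rw [List.take_append_drop])

lemma rot_nodup {Q : List V} (hnd : Q.Nodup) (π : ℕ) : (rot Q π).Nodup :=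
  (rot_perm Q π).symm.nodup hnd

lemma rot_chain' {Q : List V} (hch : Q.Chain' G.Adj) {π : ℕ} (hπ1 : 1 ≤ π)
    (hπn : π < Q.length) (hadj : G.Adj (Q.getI 0) (Q.getI π)) :
    (rot Q π).Chain' G.Adj := by
  have hne : Q ≠ [] := List.ne_nil_of_length_pos (by omega)
  unfold List.Chain'; rw [rot, List.isChain_append]
  refine ⟨?_, hch.drop π, ?_⟩
  · rw [List.isChain_reverse]
    exact (hch.take π).imp (fun a b h => h.symm)
  · intro a ha b hb
    rw [List.getLast?_reverse, List.head?_take] at ha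
    have hπ0 : π ≠ 0 := by omega
    rw [if_neg hπ0, List.head?_eq_getElem?, List.getElem?_eq_getElem (by omega : 0 < Q.length)] at ha
    rw [List.head?_drop, List.getElem?_eq_getElem hπn] at hb
    cases ha; cases hb
    rw [Q.getI_eq_getElem (by omega : 0 < Q.length), Q.getI_eq_getElem hπn] at hadj
    exact hadj

lemma rot_good (F : Frame G k) {Q : List V} (hlen : Q.length = F.n) {π : ℕ}
    (hπ : π ≤ F.t + 1) (hgood : F.Good Q) : F.Good (rot Q π) := by
  intro v
  rw [← hgood v]
  have hπl : π ≤ Q.length := by rw [hlen]; have := F.htn; omega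
  have h1 : Q.take (F.t + 1) = Q.take π ++ (Q.drop π).take (F.t + 1 - π) := by
    have : F.t + 1 = π + (F.t + 1 - π) := by omega
    rw [this, List.take_add]
    congr 2
    omega
  have h2 : (rot Q π).take (F.t + 1) =
      (Q.take π).reverse ++ (Q.drop π).take (F.t + 1 - π) := by
    rw [rot, List.take_append]
    congr 1
    · exact List.take_of_length_le (by rw [List.length_reverse, List.length_take]; omega)
    · congr 1
      rw [List.length_reverse, List.length_take]; omega
  rw [h1, h2, List.mem_append, List.mem_append, List.mem_reverse]

end WheelAux

namespace WheelAux
open List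
variable [Inhabited V] {G : SimpleGraph V} {k : ℕ}

/-- The key construction: a chord `x a — x b` of the cycle `x 0, x 1, ..., x t, x 0`,
an interior vertex `w` of the skipped arc all of whose neighbours lie on the cycle,
and at most one neighbour `x c` lost in the skipped arc, yield a `k`-wheel. -/
lemma Frame.wheel [Fintype V] (F : Frame G k) {a b w c : ℕ}
    (hwa : a < w) (hwb : w < b) (hbt : b ≤ F.t) (hne0 : a = 0 → b ≠ F.t)
    (hchord : G.Adj (F.x a) (F.x b))
    (hnbr : ∀ v, G.Adj (F.x w) v → ∃ i, i ≤ F.t ∧ v = F.x i)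
    (hlost : ∀ j, a < j → j < b → G.Adj (F.x w) (F.x j) → j = c) :
    HasKWheel G k := by
  have htn := F.htn
  set t := F.t with ht
  set n := F.n with hn
  set len1 := t + 1 - b with hlen1
  have hlen1pos : 1 ≤ len1 := by omega
  set m := len1 + (a + 1) with hm
  have hm3 : 3 ≤ m := by
    by_cases ha : a = 0
    · have := hne0 ha; omega
    · omega
  haveI : NeZero m := ⟨by omega⟩
  haveI : Fact (1 < m) := ⟨by omega⟩
  set idx : ℕ → ℕ := fun q => if q < len1 then b + q else q - len1 with hidx
  have hidxle : ∀ q, q < m → idx q ≤ t := by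
    intro q hq; rw [hidx]; dsimp only; split <;> omega
  have hidxinj : ∀ q q', q < m → q' < m → idx q = idx q' → q = q' := by
    intro q q' hq hq' h
    rw [hidx] at h; dsimp only at h
    split at h <;> split at h <;> omega
  set fZ : ZMod m → V := fun i => F.x (idx i.val) with hfZ
  have hinjZ : Function.Injective fZ := by
    intro i j hij
    rw [hfZ] at hij; dsimp only at hij
    have hiv := ZMod.val_lt i
    have hjv := ZMod.val_lt j
    have h1 : idx i.val = idx j.val :=
      F.xinj (by have := hidxle _ hiv; omega) (by have := hidxle _ hjv; omega) hij
    exact ZMod.val_injective m (hidxinj _ _ hiv hjv h1)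
  have hadjZ : ∀ i : ZMod m, G.Adj (fZ i) (fZ (i + 1)) := by
    intro i
    have hq : i.val < m := ZMod.val_lt i
    have hval : (i + 1).val = (i.val + 1) % m := by
      rw [ZMod.val_add, ZMod.val_one]
    set q := i.val with hqdef
    rw [hfZ]; dsimp only
    by_cases hqm : q + 1 = m
    · have h0 : (i + 1).val = 0 := by rw [hval, hqm]; simp
      have hq1 : idx q = a := by rw [hidx]; dsimp only; rw [if_neg (by omega)]; omega
      have hq2 : idx (i+1).val = b := by
        rw [h0, hidx]; dsimp only; rw [if_pos (by omega)]; omega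
      rw [hq2, hq1]; exact hchord
    · have hq1 : (i + 1).val = q + 1 := by rw [hval, Nat.mod_eq_of_lt (by omega)]
      rw [hq1]
      by_cases h1 : q + 1 < len1
      · have e1 : idx q = b + q := by rw [hidx]; dsimp only; rw [if_pos (by omega)]
        have e2 : idx (q+1) = b + q + 1 := by
          rw [hidx]; dsimp only; rw [if_pos h1]; omega
        rw [e1, e2]
        exact F.xadj (by omega)
      · by_cases h2 : q + 1 = len1
        · have e1 : idx q = t := by rw [hidx]; dsimp only; rw [if_pos (by omega)]; omega
          have e2 : idx (q+1) = 0 := by rw [hidx]; dsimp only; rw [if_neg (by omega)]; omega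
          rw [e1, e2]
          exact F.xA0t.symm
        · have e1 : idx q = q - len1 := by rw [hidx]; dsimp only; rw [if_neg (by omega)]
          have e2 : idx (q+1) = (q - len1) + 1 := by
            rw [hidx]; dsimp only; rw [if_neg (by omega)]; omega
          rw [e1, e2]
          exact F.xadj (by omega)
  have hnotin : F.x w ∉ Set.range fZ := by
    rintro ⟨i, hi⟩
    rw [hfZ] at hi; dsimp only at hi
    have hiv := ZMod.val_lt i
    have : idx i.val = w :=
      F.xinj (by have := hidxle _ hiv; omega) (by omega) hi
    rw [hidx] at this; dsimp only at this
    split at this <;> omega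
  -- spoke count
  have hsub : (G.neighborSet (F.x w)) \ {F.x c} ⊆
      {v : V | v ∈ Set.range fZ ∧ G.Adj (F.x w) v} := by
    rintro v ⟨hvN, hvc⟩
    have hadj : G.Adj (F.x w) v := hvN
    obtain ⟨i, hit, hvi⟩ := hnbr v hadj
    have hiab : i ≤ a ∨ b ≤ i := by
      by_contra hcon
      push_neg at hcon
      have := hlost i (by omega) (by omega) (by rw [← hvi]; exact hadj)
      exact hvc (by rw [hvi, this]; rfl)
    have : ∃ q, q < m ∧ idx q = i := by
      rcases hiab with h | h
      · exact ⟨len1 + i, by omega, by rw [hidx]; dsimp only; rw [if_neg (by omega)]; omega⟩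
      · exact ⟨i - b, by omega, by rw [hidx]; dsimp only; rw [if_pos (by omega)]; omega⟩
    obtain ⟨q, hqm, hqi⟩ := this
    refine ⟨⟨(q : ZMod m), ?_⟩, hadj⟩
    rw [hfZ]; dsimp only
    rw [ZMod.val_natCast, Nat.mod_eq_of_lt hqm, hqi, hvi]
  have hcount : k ≤ ({v : V | v ∈ Set.range fZ ∧ G.Adj (F.x w) v}).ncard := by
    have h1 : k + 1 ≤ (G.neighborSet (F.x w)).ncard := F.hdeg _
    have h2 : (G.neighborSet (F.x w)).ncard ≤
        ((G.neighborSet (F.x w)) \ {F.x c}).ncard + 1 := by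
      have hs : (G.neighborSet (F.x w)) ⊆
          ((G.neighborSet (F.x w)) \ {F.x c}) ∪ {F.x c} := by
        intro v hv
        by_cases h : v = F.x c
        · exact Or.inr h
        · exact Or.inl ⟨hv, h⟩
      calc (G.neighborSet (F.x w)).ncard
          ≤ (((G.neighborSet (F.x w)) \ {F.x c}) ∪ {F.x c}).ncard :=
            Set.ncard_le_ncard hs (Set.toFinite _)
        _ ≤ ((G.neighborSet (F.x w)) \ {F.x c}).ncard + ({F.x c} : Set V).ncard :=
            Set.ncard_union_le _ _
        _ = ((G.neighborSet (F.x w)) \ {F.x c}).ncard + 1 := by rw [Set.ncard_singleton]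
    have h3 : ((G.neighborSet (F.x w)) \ {F.x c}).ncard ≤
        ({v : V | v ∈ Set.range fZ ∧ G.Adj (F.x w) v}).ncard :=
      Set.ncard_le_ncard hsub (Set.toFinite _)
    omega
  exact ⟨m, fZ, F.x w, hm3, hinjZ, hadjZ, hnotin, hcount⟩

end WheelAux

namespace WheelAux
open List
variable [Inhabited V] {G : SimpleGraph V} {k : ℕ}

/-- ascending run `[x s, x (s+1), ..., x (s+g-1)]` -/
noncomputable def Frame.ascRun (F : Frame G k) (s g : ℕ) : List V :=
  (List.range' s g).map F.x

/-- descending run `[x (s+g-1), ..., x (s+1), x s]` -/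
noncomputable def Frame.descRun (F : Frame G k) (s g : ℕ) : List V :=
  ((List.range' s g).reverse).map F.x

lemma range'_take (s g π : ℕ) (h : π ≤ g) :
    (List.range' s g).take π = List.range' s π := by
  have h2 := List.range'_append (s := s) (m := π) (n := g - π) (step := 1)
  rw [one_mul, show π + (g - π) = g by omega] at h2
  rw [← h2, List.take_left' List.length_range']

lemma range'_reverse_take (s g π : ℕ) (h : π ≤ g) :
    ((List.range' s g).reverse).take π = (List.range' (s + g - π) π).reverse := by
  have hsplit : List.range' s (g - π) ++ List.range' (s + (g - π)) π = List.range' s g := by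
    have := List.range'_append (s := s) (m := g - π) (n := π) (step := 1)
    rw [one_mul] at this
    rw [show (g - π) + π = g by omega] at this
    exact this
  rw [← hsplit, List.reverse_append, List.take_left' (by simp), show s + (g-π) = s + g - π by omega]

lemma Frame.ascRun_length (F : Frame G k) (s g : ℕ) : (F.ascRun s g).length = g := by
  simp [Frame.ascRun]

lemma Frame.descRun_length (F : Frame G k) (s g : ℕ) : (F.descRun s g).length = g := by
  simp [Frame.descRun]

lemma Frame.ascRun_getI (F : Frame G k) (s g π : ℕ) (h : π < g) :
    (F.ascRun s g).getI π = F.x (s + π) := by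
  have hl : π < (F.ascRun s g).length := by rw [F.ascRun_length]; exact h
  rw [List.getI_eq_getElem _ hl]
  simp [Frame.ascRun]

lemma Frame.descRun_getI (F : Frame G k) (s g π : ℕ) (h : π < g) :
    (F.descRun s g).getI π = F.x (s + g - 1 - π) := by
  have hl : π < (F.descRun s g).length := by rw [F.descRun_length]; exact h
  rw [List.getI_eq_getElem _ hl]
  simp only [Frame.descRun, List.getElem_map, List.getElem_reverse, List.length_range']
  congr 1
  have hlt : g - 1 - π < (List.range' s g).length := by
    rw [List.length_range']; omega
  have : (List.range' s g)[g - 1 - π] = s + 1 * (g - 1 - π) :=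
    List.getElem_range' hlt
  rw [this]; omega

lemma Frame.ascRun_take (F : Frame G k) (s g π : ℕ) (h : π ≤ g) :
    (F.ascRun s g).take π = F.ascRun s π := by
  rw [Frame.ascRun, Frame.ascRun, ← List.map_take, range'_take _ _ _ h]

lemma Frame.descRun_take (F : Frame G k) (s g π : ℕ) (h : π ≤ g) :
    (F.descRun s g).take π = F.descRun (s + g - π) π := by
  rw [Frame.descRun, Frame.descRun, ← List.map_take, range'_reverse_take _ _ _ h]

lemma Frame.ascRun_reverse (F : Frame G k) (s g : ℕ) :
    (F.ascRun s g).reverse = F.descRun s g := by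
  rw [Frame.ascRun, Frame.descRun, List.map_reverse]

lemma Frame.descRun_reverse (F : Frame G k) (s g : ℕ) :
    (F.descRun s g).reverse = F.ascRun s g := by
  rw [← F.ascRun_reverse, List.reverse_reverse]

/-- getI through a known prefix -/
lemma getI_of_take {Q L : List V} {g π : ℕ} (hQ : Q.take g = L) (hπ : π < g)
    (hg : g ≤ Q.length) : Q.getI π = L.getI π := by
  have h1 : π < Q.length := by omega
  have h2 : π < (Q.take g).length := by rw [List.length_take]; omega
  rw [Q.getI_eq_getElem h1, ← hQ, (Q.take g).getI_eq_getElem h2]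
  simp [List.getElem_take]

lemma rot_take {Q : List V} {π : ℕ} (h : π ≤ Q.length) :
    (rot Q π).take π = (Q.take π).reverse := by
  rw [rot, List.take_append]
  have hl : (Q.take π).reverse.length = π := by
    rw [List.length_reverse, List.length_take]; omega
  rw [List.take_of_length_le (by omega), show π - (Q.take π).reverse.length = 0 by omega,
    List.take_zero, List.append_nil]

end WheelAux

namespace WheelAux
open List
variable [Inhabited V] {G : SimpleGraph V} {k : ℕ}

lemma Frame.descent [Fintype V] (F : Frame G k) : ∀ g : ℕ,
    (∀ a b (Q : List V), b - a ≤ g → a + 2 ≤ b → b ≤ F.t → (a = 0 → b ≠ F.t) →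
      G.Adj (F.x a) (F.x b) → Q.Nodup → Q.Chain' G.Adj → Q.length = F.n → F.Good Q →
      Q.take (b - a) = F.descRun a (b - a) → HasKWheel G k)
    ∧
    (∀ a b (Q : List V), b - a ≤ g → a + 2 ≤ b → b ≤ F.t → (a = 0 → b ≠ F.t) →
      G.Adj (F.x a) (F.x b) → Q.Nodup → Q.Chain' G.Adj → Q.length = F.n → F.Good Q →
      Q.take (b - a) = F.ascRun (a + 1) (b - a) → HasKWheel G k) := by
  have htn := F.htn
  intro g
  induction g with
  | zero =>
    constructor <;> (intro a b Q hg hab; omega)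
  | succ g ih =>
    constructor
    · -- descending run, head = x (b-1)
      intro a b Q hg hab hbt hne0 hchord hnd hch hlen hgood hrun
      have hglen : b - a ≤ Q.length := by rw [hlen]; omega
      have hhead : Q.getI 0 = F.x (b - 1) := by
        rw [getI_of_take hrun (by omega) hglen, F.descRun_getI _ _ _ (by omega)]
        congr 1; omega
      have hnbrw : ∀ v, G.Adj (F.x (b-1)) v → ∃ i, i ≤ F.t ∧ v = F.x i := by
        intro v hv
        exact F.nbr hnd hch hlen hgood (by rw [hhead]; exact hv)
      by_cases hJ : ∃ j, a + 1 ≤ j ∧ j + 3 ≤ b ∧ G.Adj (F.x (b-1)) (F.x j)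
      · obtain ⟨j, hj1, hj3, hjadj⟩ := hJ
        set π := b - 1 - j with hπ
        have hπ2 : 2 ≤ π := by omega
        have hπle : π ≤ b - a - 2 := by omega
        have hpivot : Q.getI π = F.x j := by
          rw [getI_of_take hrun (by omega) hglen, F.descRun_getI _ _ _ (by omega)]
          congr 1; omega
        have hadjp : G.Adj (Q.getI 0) (Q.getI π) := by
          rw [hhead, hpivot]; exact hjadj
        have hπlt : π < Q.length := by rw [hlen]; omega
        have hnd' := rot_nodup hnd π
        have hch' := rot_chain' hch (by omega) hπlt hadjp
        have hlen' : (rot Q π).length = F.n := by rw [rot_length Q (by omega)]; exact hlen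
        have hgood' := rot_good F hlen (by omega : π ≤ F.t + 1) hgood
        have hrun' : (rot Q π).take π = F.ascRun (j + 1) π := by
          rw [rot_take (by omega)]
          have : Q.take π = F.descRun (j+1) π := by
            rw [show Q.take π = (Q.take (b-a)).take π by
              rw [List.take_take]; congr 1; omega]
            rw [hrun, F.descRun_take _ _ _ (by omega)]
            congr 1; omega
          rw [this, F.descRun_reverse]
        exact (ih).2 j (b-1) (rot Q π) (by omega) (by omega) (by omega) (by omega)
          (hjadj.symm) hnd' hch' hlen' hgood'
          (by rw [show b - 1 - j = π from rfl]; exact hrun')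
      · -- no deep chord: build the wheel
        refine F.wheel (a := a) (b := b) (w := b - 1) (c := b - 2)
          (by omega) (by omega) hbt hne0 hchord hnbrw ?_
        intro j hja hjb hadj
        by_cases hjw : j = b - 1
        · exfalso; rw [hjw] at hadj; exact hadj.ne rfl
        · by_cases hjc : j = b - 2
          · exact hjc
          · exact absurd ⟨j, by omega, by omega, hadj⟩ hJ
    · -- ascending run, head = x (a+1)
      intro a b Q hg hab hbt hne0 hchord hnd hch hlen hgood hrun
      have hglen : b - a ≤ Q.length := by rw [hlen]; omega
      have hhead : Q.getI 0 = F.x (a + 1) := by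
        rw [getI_of_take hrun (by omega) hglen, F.ascRun_getI _ _ _ (by omega)]
      have hnbrw : ∀ v, G.Adj (F.x (a+1)) v → ∃ i, i ≤ F.t ∧ v = F.x i := by
        intro v hv
        exact F.nbr hnd hch hlen hgood (by rw [hhead]; exact hv)
      by_cases hJ : ∃ j, a + 3 ≤ j ∧ j + 1 ≤ b ∧ G.Adj (F.x (a+1)) (F.x j)
      · obtain ⟨j, hj3, hjb, hjadj⟩ := hJ
        set π := j - (a + 1) with hπ
        have hπ2 : 2 ≤ π := by omega
        have hπle : π ≤ b - a - 2 := by omega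
        have hpivot : Q.getI π = F.x j := by
          rw [getI_of_take hrun (by omega) hglen, F.ascRun_getI _ _ _ (by omega)]
          congr 1; omega
        have hadjp : G.Adj (Q.getI 0) (Q.getI π) := by
          rw [hhead, hpivot]; exact hjadj
        have hπlt : π < Q.length := by rw [hlen]; omega
        have hnd' := rot_nodup hnd π
        have hch' := rot_chain' hch (by omega) hπlt hadjp
        have hlen' : (rot Q π).length = F.n := by rw [rot_length Q (by omega)]; exact hlen
        have hgood' := rot_good F hlen (by omega : π ≤ F.t + 1) hgood
        have hrun' : (rot Q π).take π = F.descRun (a + 1) π := by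
          rw [rot_take (by omega)]
          have : Q.take π = F.ascRun (a+1) π := by
            rw [show Q.take π = (Q.take (b-a)).take π by
              rw [List.take_take]; congr 1; omega]
            rw [hrun, F.ascRun_take _ _ _ (by omega)]
          rw [this, F.ascRun_reverse]
        exact (ih).1 (a+1) j (rot Q π) (by omega) (by omega) (by omega) (by omega)
          hjadj hnd' hch' hlen' hgood'
          (by rw [show j - (a+1) = π from rfl]; exact hrun')
      · refine F.wheel (a := a) (b := b) (w := a + 1) (c := a + 2)
          (by omega) (by omega) hbt hne0 hchord hnbrw ?_
        intro j hja hjb hadj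
        by_cases hjw : j = a + 1
        · exfalso; rw [hjw] at hadj; exact hadj.ne rfl
        · by_cases hjc : j = a + 2
          · exact hjc
          · exact absurd ⟨j, by omega, by omega, hadj⟩ hJ

end WheelAux

namespace WheelAux
open List
variable [Inhabited V] {G : SimpleGraph V} {k : ℕ}

lemma Frame.takeP (F : Frame G k) {m : ℕ} (hm : m ≤ F.P.length) :
    F.P.take m = F.ascRun 0 m := by
  apply List.ext_getElem
  · rw [List.length_take, F.ascRun_length]; omega
  · intro i h1 h2
    have hi : i < m := by rw [F.ascRun_length] at h2; exact h2
    have hil : i < F.P.length := by omega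
    rw [List.getElem_take]
    have := F.ascRun_getI 0 m i hi
    rw [Nat.zero_add] at this
    rw [show (F.ascRun 0 m)[i] = (F.ascRun 0 m).getI i by
      rw [List.getI_eq_getElem _ h2], this, Frame.x, F.P.getI_eq_getElem hil]

lemma Frame.toWheel [Fintype V] (F : Frame G k) (hk : 4 ≤ k) : HasKWheel G k := by
  have htn := F.htn
  have hx0 : F.P.getI 0 = F.x 0 := rfl
  -- find a chord from x 0 to some x d with 2 ≤ d ≤ t - 1
  have hd : ∃ d, 2 ≤ d ∧ d + 1 ≤ F.t ∧ G.Adj (F.x 0) (F.x d) := by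
    by_contra hno
    push_neg at hno
    have hsub : G.neighborSet (F.x 0) ⊆ {F.x 1, F.x F.t} := by
      intro v hv
      have hadj : G.Adj (F.x 0) v := hv
      obtain ⟨i, hit, hvi⟩ := F.nbr F.hnd F.hch F.hlen F.goodP (by rw [hx0]; exact hadj)
      have hi0 : i ≠ 0 := by
        intro h; rw [h] at hvi; rw [hvi] at hadj; exact hadj.ne rfl
      by_cases h1 : i = 1
      · left; rw [hvi, h1]
      · by_cases hti : i = F.t
        · right; rw [hvi, hti]; rfl
        · exfalso
          have h2 : 2 ≤ i := by omega
          have h3 : i + 1 ≤ F.t := by omega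
          have := hno i h2 h3
          rw [← hvi] at this; exact this hadj
    have hle : (G.neighborSet (F.x 0)).ncard ≤ 2 := by
      calc (G.neighborSet (F.x 0)).ncard ≤ ({F.x 1, F.x F.t} : Set V).ncard :=
            Set.ncard_le_ncard hsub (Set.toFinite _)
        _ ≤ ({F.x F.t} : Set V).ncard + 1 := Set.ncard_insert_le _ _
        _ = 2 := by rw [Set.ncard_singleton]
    have := F.hdeg (F.x 0)
    omega
  obtain ⟨d, hd2, hdt, hdadj⟩ := hd
  -- rotate `P` at `d` and run the descent
  have hPadj : G.Adj (F.P.getI 0) (F.P.getI d) := hdadj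
  have hdlt : d < F.P.length := by rw [F.hlen]; omega
  have hnd' := rot_nodup F.hnd d
  have hch' := rot_chain' F.hch (by omega) hdlt hPadj
  have hlen' : (rot F.P d).length = F.n := by rw [rot_length _ (by omega)]; exact F.hlen
  have hgood' := rot_good F F.hlen (by omega : d ≤ F.t + 1) F.goodP
  have hrun' : (rot F.P d).take d = F.descRun 0 d := by
    rw [rot_take (by omega), F.takeP (by omega), F.ascRun_reverse]
  exact (F.descent d).1 0 d (rot F.P d) (by omega) (by omega) (by omega) (by omega)
    hdadj hnd' hch' hlen' hgood'
    (by rw [show d - 0 = d by omega]; exact hrun')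

lemma frame_exists [Fintype V] (G : SimpleGraph V) (k : ℕ) (hk : 1 ≤ k)
    (hdeg : ∀ v : V, k + 1 ≤ (G.neighborSet v).ncard) : Nonempty (Frame G k) := by
  classical
  have v0 : V := default
  have h1 : (G.neighborSet v0).ncard ≠ 0 := by have := hdeg v0; omega
  obtain ⟨w, hw⟩ := Set.nonempty_of_ncard_ne_zero h1
  have hadj0 : G.Adj v0 w := hw
  have hpath0 : ([v0, w] : List V).Nodup := by simp [hadj0.ne]
  have hchain0 : ([v0, w] : List V).Chain' G.Adj := List.isChain_pair.2 hadj0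
  set Pd := fun m => ∃ l : List V, l.Nodup ∧ l.Chain' G.Adj ∧ l.length = m with hPd
  have hcard2 : 2 ≤ Fintype.card V :=
    Fintype.one_lt_card_iff_nontrivial.2 ⟨v0, w, hadj0.ne⟩
  set n := Nat.findGreatest Pd (Fintype.card V) with hn
  have hn2 : 2 ≤ n := Nat.le_findGreatest hcard2 ⟨[v0, w], hpath0, hchain0, rfl⟩
  have hPn : Pd n := Nat.findGreatest_spec hcard2 ⟨[v0, w], hpath0, hchain0, rfl⟩
  have hlongest : ∀ l : List V, l.Nodup → l.Chain' G.Adj → l.length ≤ n := by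
    intro l hnd hch
    exact Nat.le_findGreatest (hnd.length_le_card) ⟨l, hnd, hch, rfl⟩
  set Td := fun s => ∃ l : List V, l.Nodup ∧ l.Chain' G.Adj ∧ l.length = n ∧ s < n ∧
    G.Adj (l.getI 0) (l.getI s) with hTd
  -- a witness for Td at some positive index
  obtain ⟨l0, hl0nd, hl0ch, hl0len⟩ := hPn
  have hl0pos : 0 < l0.length := by omega
  have hq : ∃ q, Td q ∧ 1 ≤ q := by
    have h2 : (G.neighborSet (l0.getI 0)).ncard ≠ 0 := by have := hdeg (l0.getI 0); omega
    obtain ⟨v, hv⟩ := Set.nonempty_of_ncard_ne_zero h2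
    have hadjv : G.Adj (l0.getI 0) v := hv
    have hhead : l0.head? = some (l0.getI 0) := by
      rw [List.head?_eq_getElem?, List.getElem?_eq_getElem hl0pos, l0.getI_eq_getElem hl0pos]
    have hvl : v ∈ l0 := by
      by_contra hvl
      have hnd' : (v :: l0).Nodup := List.nodup_cons.2 ⟨hvl, hl0nd⟩
      have hch' : (v :: l0).Chain' G.Adj := by
        unfold List.Chain'; rw [List.isChain_cons]
        exact ⟨fun y hy => by rw [hhead] at hy; cases hy; exact hadjv.symm, hl0ch⟩
      have := hlongest _ hnd' hch'
      simp only [List.length_cons, hl0len] at this; omega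
    obtain ⟨q, hq⟩ := List.mem_iff_get.1 hvl
    have hgv : l0.getI (q : ℕ) = v := by
      rw [l0.getI_eq_getElem q.isLt, ← hq]; simp
    have hq0 : (q : ℕ) ≠ 0 := by
      intro h
      rw [h] at hgv; rw [← hgv] at hadjv; exact hadjv.ne rfl
    refine ⟨q, ⟨l0, hl0nd, hl0ch, hl0len, by rw [← hl0len]; exact q.isLt, ?_⟩, by omega⟩
    rw [hgv]; exact hadjv
  obtain ⟨q, hTq, hq1⟩ := hq
  have hqn : q ≤ n := by obtain ⟨_, _, _, _, h, _⟩ := hTq; omega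
  set t := Nat.findGreatest Td n with htdef
  have ht1 : 1 ≤ t := le_trans hq1 (Nat.le_findGreatest hqn hTq)
  have hTt : Td t := Nat.findGreatest_spec hqn hTq
  obtain ⟨P, hPnd, hPch, hPlen, htn, hA0t⟩ := hTt
  have hmax : ∀ l : List V, l.Nodup → l.Chain' G.Adj → l.length = n →
      ∀ j : ℕ, j < n → G.Adj (l.getI 0) (l.getI j) → j ≤ t := by
    intro l hnd hch hlen j hj hadj
    exact Nat.le_findGreatest (by omega) ⟨l, hnd, hch, hlen, hj, hadj⟩
  exact ⟨⟨P, n, t, hPlen, ht1, htn, hPnd, hPch, hdeg, hlongest, hmax, hA0t⟩⟩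

end WheelAux

/-- For any integer `k ≥ 4`, every (nonempty) `k`-wheel-free graph contains a
vertex of degree at most `k`. -/
theorem wheel_free_exists_low_degree
    {V : Type*} [Fintype V] [Nonempty V] (G : SimpleGraph V)
    (k : ℕ) (hk : 4 ≤ k) (hfree : ¬ HasKWheel G k) :
    ∃ v : V, (G.neighborSet v).ncard ≤ k := by
  by_contra hcon
  push_neg at hcon
  haveI : Inhabited V := Classical.inhabited_of_nonempty ‹Nonempty V›
  have hdeg : ∀ v : V, k + 1 ≤ (G.neighborSet v).ncard := fun v => hcon v
  obtain ⟨F⟩ := WheelAux.frame_exists G k (by omega) hdeg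
  exact hfree (F.toWheel hk)
end

section
/- Every k-chromatic digraph contains a directed path of length k−1. -/
variable {V : Type*}

open Relation

lemma transGen_union_aux {R : V → V → Prop} {u v x y : V}
    (h : TransGen (fun a b => R a b ∨ (a = u ∧ b = v)) x y) :
    TransGen R x y ∨ (ReflTransGen R x u ∧ ReflTransGen R v y) := by
  induction h with
  | single hs =>
    rcases hs with h | ⟨rfl, rfl⟩
    · exact Or.inl (TransGen.single h)
    · exact Or.inr ⟨ReflTransGen.refl, ReflTransGen.refl⟩
  | tail hxb hs ih =>
    rcases hs with h | ⟨rfl, rfl⟩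
    · rcases ih with h1 | ⟨h1, h2⟩
      · exact Or.inl (h1.tail h)
      · exact Or.inr ⟨h1, h2.tail h⟩
    · rcases ih with h1 | ⟨h1, h2⟩
      · exact Or.inr ⟨h1.to_reflTransGen, ReflTransGen.refl⟩
      · exact Or.inr ⟨h1, ReflTransGen.refl⟩

lemma reach_of_chain {R : V → V → Prop} {x : V} :
    ∀ (l : List V) (a : V), List.Chain R a l → x ∈ a :: l → ReflTransGen R a x := by
  intro l
  induction l with
  | nil =>
    intro a _ hx
    rw [List.mem_singleton] at hx
    subst hx; exact ReflTransGen.refl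
  | cons b t ih =>
    intro a hc hx
    rcases List.chain_cons.mp hc with ⟨hab, ht⟩
    rcases List.mem_cons.mp hx with rfl | hx
    · exact ReflTransGen.refl
    · exact (ih b ht hx).head hab

/-- Gallai–Roy: every `k`-chromatic digraph contains a directed path of
length `k − 1` (i.e. on `k` vertices). -/
theorem gallai_roy
    {V : Type*} [Fintype V] (A : V → V → Prop) (hirr : ∀ v : V, ¬ A v v)
    (k : ℕ) (hk : 0 < k)
    (hchr : (underlying A).chromaticNumber = (k : ℕ∞)) :
    ∃ p : List V, p.Chain' A ∧ p.Nodup ∧ p.length = k := by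
  classical
  cases isEmpty_or_nonempty V with
  | inl hemp =>
    exfalso
    have h0 : (underlying A).Colorable 0 :=
      ⟨SimpleGraph.Coloring.mk (fun v => isEmptyElim v) (fun {v} => isEmptyElim v)⟩
    have hle := h0.chromaticNumber_le
    rw [hchr] at hle
    norm_cast at hle
    omega
  | inr hne =>
  let S : Finset (V × V) := Finset.univ.filter (fun p => A p.1 p.2)
  let Acyc : Finset (V × V) → Prop := fun T =>
    ∀ x : V, ¬ TransGen (fun a b => (a, b) ∈ T) x x
  have hcand : ((S.powerset).filter Acyc).Nonempty := by
    refine ⟨∅, ?_⟩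
    simp only [Finset.mem_filter, Finset.mem_powerset]
    refine ⟨Finset.empty_subset _, fun x hx => ?_⟩
    cases hx with
    | single h => simp at h
    | tail _ h => simp at h
  obtain ⟨T, hTmem, hTmax⟩ :=
    Finset.exists_max_image ((S.powerset).filter Acyc) Finset.card hcand
  rw [Finset.mem_filter, Finset.mem_powerset] at hTmem
  obtain ⟨hTS, hTacyc⟩ := hTmem
  set B : V → V → Prop := fun x y => (x, y) ∈ T with hB
  have hBA : ∀ {x y}, B x y → A x y := by
    intro x y h
    have := hTS h
    simpa [S] using this
  have hback : ∀ {u v : V}, A u v → ¬ B u v → ReflTransGen B v u := by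
    intro u v hA hnB
    have hT' : insert (u, v) T ∈ S.powerset := by
      rw [Finset.mem_powerset]
      intro p hp
      rcases Finset.mem_insert.mp hp with rfl | hp
      · simp [S, hA]
      · exact hTS hp
    have hnacyc : ¬ Acyc (insert (u, v) T) := by
      intro hac
      have hle := hTmax _ (Finset.mem_filter.mpr ⟨hT', hac⟩)
      have hcard := Finset.card_insert_of_notMem (s := T) hnB
      omega
    simp only [Acyc, not_forall, not_not] at hnacyc
    obtain ⟨x, hx⟩ := hnacyc
    have hx' : TransGen (fun a b => B a b ∨ (a = u ∧ b = v)) x x := by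
      refine TransGen.mono (show ∀ a b, _ → _ from ?_) _ _ hx
      intro a b hab
      rcases Finset.mem_insert.mp hab with h | h
      · exact Or.inr (by simpa [Prod.ext_iff] using h)
      · exact Or.inl h
    rcases transGen_union_aux hx' with h | ⟨h1, h2⟩
    · exact absurd h (hTacyc x)
    · exact h2.trans h1
  let P : V → ℕ → Prop := fun v n =>
    ∃ l : List V, l.Chain' B ∧ l.head? = some v ∧ l.Nodup ∧ l.length = n
  let f : V → ℕ := fun v => Nat.findGreatest (P v) (Fintype.card V)
  have hf_spec : ∀ v, P v (f v) ∧ 1 ≤ f v := by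
    intro v
    have h1 : P v 1 := ⟨[v], List.isChain_singleton v, by simp, by simp, by simp⟩
    have hcard : 1 ≤ Fintype.card V := Fintype.card_pos
    exact ⟨Nat.findGreatest_spec hcard h1, Nat.le_findGreatest hcard h1⟩
  have hstep : ∀ {x y : V}, B x y → f y + 1 ≤ f x := by
    intro x y hxy
    obtain ⟨⟨l, hc, hh, hnd, hl⟩, _⟩ := hf_spec y
    obtain ⟨t, rfl⟩ : ∃ t, l = y :: t := by
      cases l with
      | nil => simp at hh
      | cons a t =>
        simp only [List.head?_cons, Option.some.injEq] at hh
        exact ⟨t, by rw [hh]⟩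
    have hxl : x ∉ y :: t := by
      intro hxl
      have hreach : ReflTransGen B y x := reach_of_chain t y hc hxl
      exact hTacyc x (TransGen.head' hxy hreach)
    have hchain : List.Chain' B (x :: y :: t) := List.isChain_cons_cons.mpr ⟨hxy, hc⟩
    have hnd' : (x :: y :: t).Nodup := List.nodup_cons.mpr ⟨hxl, hnd⟩
    have hlen : (x :: y :: t).length ≤ Fintype.card V := hnd'.length_le_card
    have hP : P x (f y + 1) := ⟨x :: y :: t, hchain, by simp, hnd', by simp [← hl]⟩
    refine Nat.le_findGreatest ?_ hP
    have h2 : t.length + 1 = f y := by simpa using hl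
    simp only [List.length_cons] at hlen
    omega
  have hTG : ∀ {x y : V}, TransGen B x y → f y + 1 ≤ f x := by
    intro x y h
    induction h with
    | single h => exact hstep h
    | tail _ h ih => have := hstep h; omega
  have hfne : ∀ {x y : V}, (underlying A).Adj x y → f x ≠ f y := by
    intro x y hadj
    obtain ⟨hne, hA⟩ : x ≠ y ∧ (A x y ∨ A y x) := hadj
    have key : ∀ {a b : V}, A a b → a ≠ b → f a ≠ f b := by
      intro a b hab hne'
      by_cases hb : B a b
      · have := hstep hb; omega
      · have hr := hback hab hb
        rcases reflTransGen_iff_eq_or_transGen.mp hr with rfl | htg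
        · exact absurd rfl hne'
        · have := hTG htg; omega
    rcases hA with h | h
    · exact key h hne
    · exact (key h hne.symm).symm
  let N : ℕ := Finset.univ.sup f
  have hfN : ∀ v, f v ≤ N := fun v => Finset.le_sup (Finset.mem_univ v)
  have hN1 : 1 ≤ N := le_trans (hf_spec (Classical.arbitrary V)).2 (hfN _)
  have hcol : (underlying A).Colorable N := by
    refine ⟨SimpleGraph.Coloring.mk
      (fun v => ⟨f v - 1, by have := hfN v; have := (hf_spec v).2; omega⟩) ?_⟩
    intro x y hadj
    have h1 := hfne hadj
    have h2 := (hf_spec x).2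
    have h3 := (hf_spec y).2
    simp only [Fin.mk.injEq, Ne]
    omega
  have hkN : k ≤ N := by
    have := hcol.chromaticNumber_le
    rw [hchr] at this
    exact_mod_cast this
  obtain ⟨v, -, hv⟩ := Finset.exists_mem_eq_sup Finset.univ Finset.univ_nonempty f
  obtain ⟨⟨l, hc, hh, hnd, hl⟩, -⟩ := hf_spec v
  have hlN : l.length = N := by rw [hl]; exact hv.symm
  refine ⟨l.take k, (hc.take k).imp (fun a b h => hBA h), hnd.sublist (l.take_sublist k), ?_⟩
  rw [List.length_take, hlN]
  omega
end

section
/- For any positive integers b and c, there exists an acyclic digraph D with χ(D) ≥ c in which every oriented cycle has more than b blocks. -/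
variable {V : Type*}

/-- A digraph is acyclic if it contains no directed cycle. -/
def Acyclic (A : V → V → Prop) : Prop :=
  ¬ ∃ (x : V) (l : List V), (x :: l).Nodup ∧ List.Chain A x (l ++ [x])

open Finset

open Finset

section Arith

/-- `2 * a^a ≤ (a+1)^a` for `a ≥ 1`. -/
lemma two_mul_pow_le (a : ℕ) (ha : 1 ≤ a) : 2 * a ^ a ≤ (a + 1) ^ a := by
  have hx : (-2 : ℚ) ≤ 1 / a := by
    have : (0:ℚ) ≤ 1 / a := by positivity
    linarith
  have hber : (1 : ℚ) + a * (1 / a) ≤ (1 + 1 / a) ^ a := one_add_mul_le_pow hx a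
  have haq : (a : ℚ) ≠ 0 := by
    exact_mod_cast Nat.one_le_iff_ne_zero.mp ha
  have h2 : (2 : ℚ) ≤ (1 + 1 / a) ^ a := by
    rw [mul_one_div, div_self haq] at hber; linarith
  have hpos : (0:ℚ) ≤ (a:ℚ) ^ a := by positivity
  have hmul : (2 : ℚ) * a ^ a ≤ (1 + 1 / a) ^ a * a ^ a := by nlinarith
  have hid : ((1 : ℚ) + 1 / a) ^ a * a ^ a = ((a:ℚ) + 1) ^ a := by
    rw [← mul_pow]; congr 1; field_simp
  rw [hid] at hmul
  exact_mod_cast hmul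

lemma two_mul_pow_succ_le (a : ℕ) (ha : 1 ≤ a) : 2 * a ^ (a + 1) ≤ (a + 1) ^ (a + 1) := by
  calc 2 * a ^ (a + 1) = (2 * a ^ a) * a := by ring
    _ ≤ (a + 1) ^ a * (a + 1) := Nat.mul_le_mul (two_mul_pow_le a ha) (by omega)
    _ = (a + 1) ^ (a + 1) := by ring

/-- `2^(Q/s) * (s-1)^Q ≤ s^Q` for `s ≥ 2`. -/
lemma pow_chunk (s Q : ℕ) (hs : 2 ≤ s) : 2 ^ (Q / s) * (s - 1) ^ Q ≤ s ^ Q := by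
  obtain ⟨a, rfl⟩ : ∃ a, s = a + 1 := ⟨s - 1, by omega⟩
  have ha : 1 ≤ a := by omega
  have key : 2 * a ^ (a + 1) ≤ (a + 1) ^ (a + 1) := two_mul_pow_succ_le a ha
  have main : ∀ q ρ : ℕ, 2 ^ q * a ^ ((a + 1) * q + ρ) ≤ (a + 1) ^ ((a + 1) * q + ρ) := by
    intro q
    induction q with
    | zero =>
      intro ρ; simpa using Nat.pow_le_pow_left (by omega) ρ
    | succ q ih =>
      intro ρ
      have e1 : (a + 1) * (q + 1) + ρ = ((a + 1) * q + ρ) + (a + 1) := by ring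
      rw [e1]
      calc 2 ^ (q + 1) * a ^ ((a + 1) * q + ρ + (a + 1))
          = (2 ^ q * a ^ ((a + 1) * q + ρ)) * (2 * a ^ (a + 1)) := by
            rw [pow_add, pow_succ]; ring
        _ ≤ ((a + 1) ^ ((a + 1) * q + ρ)) * ((a + 1) ^ (a + 1)) :=
            Nat.mul_le_mul (ih ρ) key
        _ = (a + 1) ^ ((a + 1) * q + ρ + (a + 1)) := (pow_add _ _ _).symm
  have hQ : (a + 1) * (Q / (a + 1)) + Q % (a + 1) = Q := Nat.div_add_mod Q (a + 1)
  have := main (Q / (a + 1)) (Q % (a + 1))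
  rw [hQ] at this
  simpa using this

end Arith

open Finset

section Counting

variable {I : Type*} [Fintype I] [DecidableEq I] {s : ℕ}

lemma count_forall_mem (S : Finset I) (B : Finset (Fin s)) :
    (univ.filter fun ω : I → Fin s => ∀ e ∈ S, ω e ∈ B).card
      = B.card ^ S.card * s ^ (Fintype.card I - S.card) := by
  have hset : (univ.filter fun ω : I → Fin s => ∀ e ∈ S, ω e ∈ B)
      = Fintype.piFinset (fun e => if e ∈ S then B else univ) := by
    ext ω
    simp only [mem_filter, mem_univ, true_and, Fintype.mem_piFinset]
    constructor
    · intro h e; split_ifs with he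
      · exact h e he
      · exact mem_univ _
    · intro h e he; have := h e; rwa [if_pos he] at this
  rw [hset, Fintype.card_piFinset]
  rw [← Finset.prod_sdiff (Finset.subset_univ S)]
  have h1 : ∀ e ∈ S, (if e ∈ S then B else univ).card = B.card := by
    intro e he; rw [if_pos he]
  have h2 : ∀ e ∈ univ \ S, (if e ∈ S then B else univ).card = s := by
    intro e he; rw [mem_sdiff] at he; rw [if_neg he.2, card_univ, Fintype.card_fin]
  rw [Finset.prod_congr rfl h1, Finset.prod_congr rfl h2, Finset.prod_const, Finset.prod_const,
    card_sdiff_of_subset (subset_univ S), card_univ]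
  ring

lemma count_all_zero [NeZero s] (S : Finset I) :
    (univ.filter fun ω : I → Fin s => ∀ e ∈ S, ω e = 0).card
      = s ^ (Fintype.card I - S.card) := by
  have := count_forall_mem (s := s) S {0}
  simp only [mem_singleton, card_singleton, one_pow, one_mul] at this
  rw [← this]

lemma count_all_ne [NeZero s] (S : Finset I) :
    (univ.filter fun ω : I → Fin s => ∀ e ∈ S, ω e ≠ 0).card
      = (s - 1) ^ S.card * s ^ (Fintype.card I - S.card) := by
  have := count_forall_mem (s := s) S (univ.erase 0)
  simp only [mem_erase, mem_univ, and_true, card_erase_of_mem, card_univ, Fintype.card_fin] at this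
  rw [← this]

end Counting

open Finset

-- helper: monotone shifting of products of powers
lemma le_shift (n s M a g : ℕ) (h1 : s ≤ n) (ha : a ≤ g) (hg : g ≤ M) :
    n ^ a * s ^ (M - a) ≤ n ^ g * s ^ (M - g) := by
  obtain ⟨d, rfl⟩ : ∃ d, g = a + d := ⟨g - a, by omega⟩
  obtain ⟨e, rfl⟩ : ∃ e, M = (a + d) + e := ⟨M - (a + d), by omega⟩
  have e1 : a + d + e - a = d + e := by omega
  have e2 : a + d + e - (a + d) = e := by omega
  rw [e1, e2, pow_add, pow_add]
  calc n ^ a * (s ^ d * s ^ e) = (n ^ a * s ^ e) * s ^ d := by ring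
    _ ≤ (n ^ a * s ^ e) * n ^ d := Nat.mul_le_mul_left _ (Nat.pow_le_pow_left h1 d)
    _ = n ^ a * n ^ d * s ^ e := by ring

section Core

variable (g c n s r N2 : ℕ)

theorem core (h2s : 2 ≤ s) (h0n : 0 < n) (hsn : s ≤ n) (hgn : g ≤ n)
    (hA : 4 * g * n ^ g < n * s ^ g)
    (hB : 2 * n ^ r < 2 ^ N2)
    (hQr : 2 * (s * N2) ≤ r * (r - 1))
    (hrn : r ≤ n) (h2r : 2 ≤ r)
    (hcr : 2 * c * r < n) :
    ∃ H : SimpleGraph (Fin n),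
      (∀ (k : ℕ) (f : ZMod (k + 3) → Fin n), k + 3 ≤ g → Function.Injective f →
        ¬ (∀ i, H.Adj (f i) (f (i + 1)))) ∧
      ¬ H.Colorable (c - 1) := by
  classical
  haveI : NeZero s := ⟨by omega⟩
  set I := Sym2 (Fin n) with hI
  set M := Fintype.card I with hM
  -- the edge relation of ω
  let E : (I → Fin s) → Fin n → Fin n → Prop := fun ω x y => x ≠ y ∧ ω s(x, y) = 0
  have Esymm : ∀ ω x y, E ω x y → E ω y x := by
    intro ω x y ⟨h1, h2⟩
    exact ⟨h1.symm, by rwa [Sym2.eq_swap]⟩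
  have Edec : ∀ ω x y, Decidable (E ω x y) := fun ω x y => instDecidableAnd
  -- cycle witnesses
  let CycSet : ∀ k : ℕ, (I → Fin s) → Finset (ZMod (k + 3) → Fin n) := fun k ω =>
    univ.filter (fun f => Function.Injective f ∧ ∀ i, E ω (f i) (f (i + 1)))
  let Xcard : (I → Fin s) → ℕ := fun ω => ∑ k ∈ range (g - 2), (CycSet k ω).card
  -- counting the cycle events
  have cyc_event : ∀ (k : ℕ), k + 3 ≤ g → ∀ f : ZMod (k + 3) → Fin n,
      (univ.filter fun ω : I → Fin s => f ∈ CycSet k ω).card ≤ s ^ (M - (k + 3)) := by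
    intro k hk f
    by_cases hinj : Function.Injective f
    · -- the set of required pairs
      set S : Finset I := univ.image (fun i : ZMod (k + 3) => s(f i, f (i + 1))) with hS
      have hScard : S.card = k + 3 := by
        rw [hS, card_image_of_injective _ ?_, card_univ, ZMod.card]
        intro i j hij
        rw [Sym2.eq_iff] at hij
        rcases hij with ⟨h1, _⟩ | ⟨h1, h2⟩
        · exact hinj h1
        · exfalso
          have hij' : i = j + 1 := hinj h1
          have hji' : i + 1 = j := hinj h2
          have : i = i + 2 := by
            conv_lhs => rw [hij', ← hji']
            ring
          have h20 : (2 : ZMod (k + 3)) = 0 := by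
            have := left_eq_add.mp this
            exact this
          have hv : ((2 : ℕ) : ZMod (k + 3)).val = 2 := ZMod.val_cast_of_lt (by omega)
          rw [show ((2 : ℕ) : ZMod (k + 3)) = (2 : ZMod (k + 3)) by push_cast; ring] at hv
          rw [h20] at hv
          simp [ZMod.val_zero] at hv
      have hsub : (univ.filter fun ω : I → Fin s => f ∈ CycSet k ω) ⊆
          (univ.filter fun ω : I → Fin s => ∀ e ∈ S, ω e = 0) := by
        intro ω hω
        rw [mem_filter] at hω ⊢
        refine ⟨mem_univ _, ?_⟩
        have hω' := hω.2
        rw [mem_filter] at hω'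
        intro e he
        rw [hS, mem_image] at he
        obtain ⟨i, _, rfl⟩ := he
        exact (hω'.2.2 i).2
      calc (univ.filter fun ω : I → Fin s => f ∈ CycSet k ω).card
          ≤ (univ.filter fun ω : I → Fin s => ∀ e ∈ S, ω e = 0).card := card_le_card hsub
        _ = s ^ (M - S.card) := count_all_zero S
        _ = s ^ (M - (k + 3)) := by rw [hScard]
    · have : (univ.filter fun ω : I → Fin s => f ∈ CycSet k ω) = ∅ := by
        apply filter_eq_empty_iff.mpr
        intro ω _
        intro hmem
        rw [mem_filter] at hmem
        exact hinj hmem.2.1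
      rw [this]
      simp

  have hnM : n ≤ M := by
    have : Function.Injective (fun x : Fin n => (s(x, x) : I)) := by
      intro x y hxy
      rw [Sym2.eq_iff] at hxy
      tauto
    simpa [hM, Fintype.card_fin] using Fintype.card_le_of_injective _ this
  have hgM : g ≤ M := le_trans hgn hnM
  -- Markov bound for the number of short cycles
  have swap : ∀ k, k + 3 ≤ g → ∑ ω : I → Fin s, (CycSet k ω).card ≤ n ^ g * s ^ (M - g) := by
    intro k hk
    have hcardω : ∀ ω : I → Fin s, (CycSet k ω).card
        = ∑ f : ZMod (k + 3) → Fin n, if f ∈ CycSet k ω then 1 else 0 := by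
      intro ω
      rw [← card_filter]
      congr 1
      ext f; simp
    have hcardf : ∀ f : ZMod (k + 3) → Fin n,
        (univ.filter fun ω : I → Fin s => f ∈ CycSet k ω).card
        = ∑ ω : I → Fin s, if f ∈ CycSet k ω then 1 else 0 := fun f => card_filter _ _
    calc ∑ ω : I → Fin s, (CycSet k ω).card
        = ∑ ω : I → Fin s, ∑ f : ZMod (k+3) → Fin n, if f ∈ CycSet k ω then 1 else 0 :=
          Finset.sum_congr rfl (fun ω _ => hcardω ω)
      _ = ∑ f : ZMod (k+3) → Fin n, ∑ ω : I → Fin s, if f ∈ CycSet k ω then 1 else 0 :=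
          Finset.sum_comm
      _ = ∑ f : ZMod (k+3) → Fin n, (univ.filter fun ω : I → Fin s => f ∈ CycSet k ω).card :=
          Finset.sum_congr rfl (fun f _ => (hcardf f).symm)
      _ ≤ ∑ _f : ZMod (k+3) → Fin n, s ^ (M - (k+3)) :=
          Finset.sum_le_sum (fun f _ => cyc_event k hk f)
      _ = (n ^ (k+3)) * s ^ (M - (k+3)) := by
          rw [Finset.sum_const, card_univ, Fintype.card_fun, ZMod.card, Fintype.card_fin,
            smul_eq_mul]
      _ ≤ n ^ g * s ^ (M - g) := le_shift n s M (k+3) g hsn hk hgM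
  have hXsum : ∑ ω : I → Fin s, Xcard ω ≤ g * (n ^ g * s ^ (M - g)) := by
    calc ∑ ω : I → Fin s, Xcard ω
        = ∑ k ∈ range (g-2), ∑ ω : I → Fin s, (CycSet k ω).card := Finset.sum_comm
      _ ≤ ∑ _k ∈ range (g-2), n ^ g * s ^ (M - g) :=
          Finset.sum_le_sum (fun k hk => swap k (by rw [mem_range] at hk; omega))
      _ = (g-2) * (n^g * s^(M-g)) := by rw [sum_const, card_range, smul_eq_mul]
      _ ≤ g * (n^g * s^(M-g)) := Nat.mul_le_mul_right _ (by omega)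
  -- Bad event 1
  let Bad1 : Finset (I → Fin s) := univ.filter (fun ω => n ≤ 2 * Xcard ω)
  have hBad1 : 2 * Bad1.card < s ^ M := by
    have h1 : Bad1.card * n ≤ ∑ ω ∈ Bad1, 2 * Xcard ω := by
      calc Bad1.card * n = ∑ _ω ∈ Bad1, n := by rw [sum_const, smul_eq_mul]
        _ ≤ ∑ ω ∈ Bad1, 2 * Xcard ω := Finset.sum_le_sum (fun ω hω => (mem_filter.mp hω).2)
    have h2 : ∑ ω ∈ Bad1, 2 * Xcard ω ≤ 2 * ∑ ω : I → Fin s, Xcard ω := by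
      rw [Finset.mul_sum]
      exact Finset.sum_le_sum_of_subset (subset_univ _)
    have h3 : Bad1.card * n ≤ 2 * (g * (n ^ g * s ^ (M - g))) :=
      le_trans h1 (le_trans h2 (Nat.mul_le_mul_left 2 hXsum))
    have h4 : 4 * g * (n ^ g * s ^ (M - g)) < n * s ^ M := by
      have hsM : s ^ g * s ^ (M - g) = s ^ M := by
        rw [← pow_add]; congr 1; omega
      calc 4 * g * (n ^ g * s ^ (M - g)) = (4 * g * n ^ g) * s ^ (M - g) := by ring
        _ < (n * s ^ g) * s ^ (M - g) :=
            (Nat.mul_lt_mul_right (Nat.pow_pos (a := s) (by omega))).mpr hA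
        _ = n * s ^ M := by rw [mul_assoc, hsM]
    have h5 : (2 * Bad1.card) * n < s ^ M * n := by
      calc (2 * Bad1.card) * n = 2 * (Bad1.card * n) := by ring
        _ ≤ 2 * (2 * (g * (n ^ g * s ^ (M - g)))) := Nat.mul_le_mul_left 2 h3
        _ = 4 * g * (n ^ g * s ^ (M - g)) := by ring
        _ < n * s ^ M := h4
        _ = s ^ M * n := by ring
    exact Nat.lt_of_mul_lt_mul_right h5
  -- Bad event 2
  set Q := s * N2 with hQdef
  let pairsT : Finset (Fin n) → Finset I := fun T => T.sym2.filter (fun e => ¬ e.IsDiag)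
  have hpairs_card : ∀ T : Finset (Fin n), T.card = r → Q ≤ (pairsT T).card := by
    intro T hT
    have hmaps : ∀ p ∈ T.offDiag, (s(p.1, p.2) : I) ∈ pairsT T := by
      intro p hp
      rw [mem_offDiag] at hp
      rw [mem_filter]
      exact ⟨Finset.mk_mem_sym2_iff.mpr ⟨hp.1, hp.2.1⟩, by rw [Sym2.mk_isDiag_iff]; exact hp.2.2⟩
    have hfib : ∀ e ∈ pairsT T, (T.offDiag.filter (fun p => (s(p.1, p.2) : I) = e)).card ≤ 2 := by
      intro e he
      clear he
      induction e using Sym2.ind with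
      | _ a b =>
        have hsub : T.offDiag.filter (fun p => (s(p.1, p.2) : I) = s(a, b))
            ⊆ {(a, b), (b, a)} := by
          intro p hp
          rw [mem_filter] at hp
          have := hp.2
          rw [Sym2.eq_iff] at this
          rcases this with ⟨h1, h2⟩ | ⟨h1, h2⟩
          · simp [← h1, ← h2]
          · simp [← h1, ← h2]
        calc _ ≤ ({(a, b), (b, a)} : Finset (Fin n × Fin n)).card := card_le_card hsub
          _ ≤ 2 := card_insert_le _ _ |>.trans (by simp)
    have hoff := card_le_mul_card_image_of_maps_to hmaps 2 hfib
    rw [offDiag_card, hT] at hoff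
    have hrr : r * (r - 1) = r * r - r := by
      obtain ⟨r', rfl⟩ : ∃ r', r = r' + 1 := ⟨r - 1, by omega⟩
      simp only [Nat.add_sub_cancel]
      have h1 : (r' + 1) * (r' + 1) = (r' + 1) * r' + (r' + 1) := by ring
      omega
    omega
  have hQM : Q ≤ M := by
    obtain ⟨T, -, hT⟩ := exists_subset_card_eq (show r ≤ (univ : Finset (Fin n)).card by
      rw [card_univ, Fintype.card_fin]; exact hrn)
    exact le_trans (hpairs_card T hT) (le_trans (card_le_card (subset_univ _))
      (by rw [card_univ]))
  let Bad2 : Finset (I → Fin s) := univ.filter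
    (fun ω => ∃ T ∈ powersetCard r (univ : Finset (Fin n)), ∀ x ∈ T, ∀ y ∈ T, ¬ E ω x y)
  have hBad2 : 2 * Bad2.card < s ^ M := by
    have hsub : Bad2 ⊆ (powersetCard r (univ : Finset (Fin n))).biUnion
        (fun T => univ.filter (fun ω : I → Fin s => ∀ e ∈ pairsT T, ω e ≠ 0)) := by
      intro ω hω
      rw [mem_filter] at hω
      obtain ⟨-, T, hT, hind⟩ := hω
      rw [mem_biUnion]
      refine ⟨T, hT, ?_⟩
      rw [mem_filter]
      refine ⟨mem_univ _, ?_⟩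
      intro e he
      rw [mem_filter] at he
      revert he
      induction e using Sym2.ind with
      | _ x y =>
        intro he
        have hxy : x ∈ T ∧ y ∈ T := Finset.mk_mem_sym2_iff.mp he.1
        have hne : x ≠ y := by
          have := he.2
          rw [Sym2.mk_isDiag_iff] at this
          exact this
        intro h0
        exact hind x hxy.1 y hxy.2 ⟨hne, h0⟩
    have hcount : ∀ T ∈ powersetCard r (univ : Finset (Fin n)),
        (univ.filter (fun ω : I → Fin s => ∀ e ∈ pairsT T, ω e ≠ 0)).card
          ≤ (s - 1) ^ Q * s ^ (M - Q) := by
      intro T hT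
      rw [count_all_ne]
      have hq1 : Q ≤ (pairsT T).card :=
        hpairs_card T (Finset.mem_powersetCard.mp hT).2
      have hq2 : (pairsT T).card ≤ M := le_trans (card_le_card (subset_univ _)) (by rw [card_univ])
      have := le_shift s (s-1) M (M - (pairsT T).card) (M - Q) (by omega) (by omega) (by omega)
      rw [show M - (M - (pairsT T).card) = (pairsT T).card by omega,
        show M - (M - Q) = Q by omega] at this
      calc (s - 1) ^ (pairsT T).card * s ^ (M - (pairsT T).card)
          = s ^ (M - (pairsT T).card) * (s - 1) ^ (pairsT T).card := by ring
        _ ≤ s ^ (M - Q) * (s - 1) ^ Q := this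
        _ = (s - 1) ^ Q * s ^ (M - Q) := by ring
    have hcard2 : Bad2.card ≤ n ^ r * ((s - 1) ^ Q * s ^ (M - Q)) := by
      calc Bad2.card ≤ ∑ T ∈ powersetCard r (univ : Finset (Fin n)),
            (univ.filter (fun ω : I → Fin s => ∀ e ∈ pairsT T, ω e ≠ 0)).card :=
            le_trans (card_le_card hsub) (card_biUnion_le)
        _ ≤ ∑ _T ∈ powersetCard r (univ : Finset (Fin n)), (s - 1) ^ Q * s ^ (M - Q) :=
            Finset.sum_le_sum hcount
        _ = (powersetCard r (univ : Finset (Fin n))).card * ((s - 1) ^ Q * s ^ (M - Q)) := by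
            rw [sum_const, smul_eq_mul]
        _ ≤ n ^ r * ((s - 1) ^ Q * s ^ (M - Q)) := by
            apply Nat.mul_le_mul_right
            rw [card_powersetCard, card_univ, Fintype.card_fin]
            exact Nat.choose_le_pow n r
    have hpos : 0 < (s - 1) ^ Q * s ^ (M - Q) :=
      Nat.mul_pos (Nat.pow_pos (by omega)) (Nat.pow_pos (by omega))
    have hchunk : 2 ^ N2 * (s - 1) ^ Q ≤ s ^ Q := by
      have := pow_chunk s Q (by omega)
      rwa [hQdef, Nat.mul_div_cancel_left N2 (by omega : 0 < s)] at this
    calc 2 * Bad2.card ≤ 2 * (n ^ r * ((s - 1) ^ Q * s ^ (M - Q))) := Nat.mul_le_mul_left 2 hcard2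
      _ = (2 * n ^ r) * ((s - 1) ^ Q * s ^ (M - Q)) := by ring
      _ < 2 ^ N2 * ((s - 1) ^ Q * s ^ (M - Q)) :=
          (Nat.mul_lt_mul_right hpos).mpr hB
      _ = (2 ^ N2 * (s - 1) ^ Q) * s ^ (M - Q) := by ring
      _ ≤ s ^ Q * s ^ (M - Q) := Nat.mul_le_mul_right _ hchunk
      _ = s ^ M := by rw [← pow_add]; congr 1; omega
  -- a good ω exists
  obtain ⟨ω, hωgood⟩ : ∃ ω : I → Fin s, ω ∉ Bad1 ∪ Bad2 := by
    by_contra hcon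
    push_neg at hcon
    have hsub : (univ : Finset (I → Fin s)) ⊆ Bad1 ∪ Bad2 := fun ω _ => hcon ω
    have h1 := card_le_card hsub
    rw [card_univ, Fintype.card_fun, Fintype.card_fin, ← hM] at h1
    have h2 := card_union_le Bad1 Bad2
    omega
  rw [mem_union] at hωgood
  push_neg at hωgood
  have good1 : 2 * Xcard ω < n := by
    have := hωgood.1
    rw [mem_filter] at this
    push_neg at this
    exact this (mem_univ _)
  have good2 : ∀ T : Finset (Fin n), T.card = r → ∃ x ∈ T, ∃ y ∈ T, E ω x y := by
    intro T hT
    have := hωgood.2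
    rw [mem_filter] at this
    push_neg at this
    have h2 := this (mem_univ _) T (by
      rw [Finset.mem_powersetCard]
      exact ⟨subset_univ _, hT⟩)
    obtain ⟨x, hx, y, hy, hxy⟩ := h2
    exact ⟨x, hx, y, hy, hxy⟩
  -- the graph: delete a vertex of each short cycle
  let W : Finset (Fin n) := (range (g - 2)).biUnion (fun k => (CycSet k ω).image (fun f => f 0))
  have hW : W.card ≤ Xcard ω :=
    le_trans (card_biUnion_le) (Finset.sum_le_sum fun k _ => card_image_le)
  refine ⟨{ Adj := fun x y => E ω x y ∧ x ∉ W ∧ y ∉ W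
            symm := ⟨fun x y ⟨h1, h2, h3⟩ => ⟨Esymm ω x y h1, h3, h2⟩⟩
            loopless := ⟨fun x ⟨h1, _⟩ => h1.1 rfl⟩ }, ?_, ?_⟩
  · intro k f hk hinj hall
    have hmem : f ∈ CycSet k ω := by
      rw [mem_filter]
      exact ⟨mem_univ _, hinj, fun i => (hall i).1⟩
    have h0W : f 0 ∈ W := by
      rw [mem_biUnion]
      exact ⟨k, mem_range.mpr (by omega), mem_image_of_mem _ hmem⟩
    exact (hall 0).2.1 h0W
  · rintro ⟨κ⟩
    set U : Finset (Fin n) := univ \ W with hU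
    have hUcard : (c - 1) * r < U.card := by
      have hU1 : U.card = n - W.card := by
        rw [hU, card_sdiff_of_subset (subset_univ _), card_univ, Fintype.card_fin]
      have hle : 2 * ((c - 1) * r) < n := by
        have h1 : (c - 1) * r ≤ c * r := Nat.mul_le_mul_right r (by omega)
        have h2 : 2 * (c * r) = 2 * c * r := by ring
        omega
      omega
    obtain ⟨a, -, ha⟩ := exists_lt_card_fiber_of_mul_lt_card_of_maps_to
      (f := fun v => κ v) (t := (univ : Finset (Fin (c - 1)))) (fun v _ => mem_univ _)
      (by rw [card_univ, Fintype.card_fin]; exact hUcard)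
    obtain ⟨T, hTsub, hTcard⟩ := exists_subset_card_eq (le_of_lt ha)
    obtain ⟨x, hxT, y, hyT, hexy⟩ := good2 T hTcard
    have hx := hTsub hxT
    have hy := hTsub hyT
    rw [mem_filter] at hx hy
    have hxU := hx.1
    have hyU := hy.1
    rw [hU, mem_sdiff] at hxU hyU
    exact κ.valid ⟨hexy, hxU.2, hyU.2⟩ (hx.2.trans hy.2.symm)


end Core

open Finset

theorem numeric (b c : ℕ) (hb : 1 ≤ b) (hc : 1 ≤ c) :
    ∃ n : ℕ, 0 < n ∧ ∃ H : SimpleGraph (Fin n),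
      (∀ (k : ℕ) (f : ZMod (k + 3) → Fin n), k + 3 ≤ b * c → Function.Injective f →
        ¬ (∀ i, H.Adj (f i) (f (i + 1)))) ∧
      ¬ H.Colorable (c - 1) := by
  set g := b * c with hgdef
  have hg : 1 ≤ g := Nat.one_le_iff_ne_zero.mpr (by positivity)
  set K := 40 * c * g + 3 with hKdef
  set u := K * K with hudef
  have hK3 : 3 ≤ K := by omega
  have hu3 : 3 ≤ u := by
    have h1 : K ≤ K * K := Nat.le_mul_of_pos_right K (by omega)
    omega
  set n := 2 ^ (2 * g * u) with hndef
  set s := 2 ^ ((2 * g - 1) * u) with hsdef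
  set r := 2 * s * (2 * g * u + 2) with hrdef
  set N2 := 2 * g * u * r + 2 with hN2def
  -- basic facts
  have hgu1 : 1 ≤ g * u := Nat.mul_pos (by omega) (by omega)
  have hKu : K * u < 2 ^ u := by
    have h1 : 2 ^ u = (2 ^ K) ^ K := by rw [hudef, pow_mul]
    have h2 : (K + 1) ^ K ≤ (2 ^ K) ^ K := Nat.pow_le_pow_left (Nat.lt_two_pow_self (n := K)) K
    have h3 : (K + 1) ^ 3 ≤ (K + 1) ^ K := Nat.pow_le_pow_right (by omega) hK3
    have h4 : (K + 1) ^ 3 = K * (K * K) + (3 * (K * K) + 3 * K + 1) := by ring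
    have h5 : K * u = K * (K * K) := by rw [hudef]
    omega
  have h2s : 2 ≤ s := by
    rw [hsdef]
    calc (2:ℕ) = 2 ^ 1 := (pow_one 2).symm
      _ ≤ 2 ^ ((2 * g - 1) * u) := Nat.pow_le_pow_right (by omega) (Nat.mul_pos (by omega) (by omega))
  have hsplit : 2 * g * u = (2 * g - 1) * u + u := by
    have h1 : ((2 * g - 1) + 1) * u = (2 * g - 1) * u + u := by ring
    have h2 : 2 * g - 1 + 1 = 2 * g := by omega
    rw [h2] at h1
    omega
  have hns : n = s * 2 ^ u := by
    rw [hndef, hsdef, ← pow_add, hsplit]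
  have h16 : 4 * c * (2 * g * u + 2) < 2 ^ u := by
    have e1 : 4 * c * (2 * g * u + 2) = 8 * (c * (g * u)) + 8 * c := by ring
    have e2 : 16 * c * g * u = 16 * (c * (g * u)) := by ring
    have e3 : c ≤ c * (g * u) := Nat.le_mul_of_pos_right c (by omega)
    have e4 : 16 * c * g * u ≤ K * u := by
      apply Nat.mul_le_mul_right u
      have : 16 * (c * g) ≤ 40 * (c * g) + 3 := by omega
      calc 16 * c * g = 16 * (c * g) := by ring
        _ ≤ 40 * (c * g) + 3 := this
        _ = 40 * c * g + 3 := by ring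
    omega
  have h0n : 0 < n := by positivity
  have hsn : s ≤ n := by
    rw [hndef, hsdef]
    exact Nat.pow_le_pow_right (by omega) (by omega)
  have hgn : g ≤ n := by
    have h1 : g < 2 ^ g := Nat.lt_two_pow_self (n := g)
    have h2 : (2:ℕ) ^ g ≤ 2 ^ (2 * g * u) := by
      apply Nat.pow_le_pow_right (by omega)
      have h3 : g ≤ g * (2 * u) := Nat.le_mul_of_pos_right g (by omega)
      have h4 : g * (2 * u) = 2 * g * u := by ring
      omega
    omega
  have hA : 4 * g * n ^ g < n * s ^ g := by
    have en : n ^ g = 2 ^ (2 * g * u * g) := by rw [hndef, ← pow_mul]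
    have es : n * s ^ g = 2 ^ (2 * g * u + (2 * g - 1) * u * g) := by
      rw [hndef, hsdef, ← pow_mul, ← pow_add]
    have eexp : 2 * g * u + (2 * g - 1) * u * g = 2 * g * u * g + g * u := by
      have h1 : (2 * g - 1) * u * g + u * g = 2 * g * u * g := by
        have h2 : 2 * g - 1 + 1 = 2 * g := by omega
        calc (2 * g - 1) * u * g + u * g = ((2 * g - 1) + 1) * (u * g) := by ring
          _ = (2 * g) * (u * g) := by rw [h2]
          _ = 2 * g * u * g := by ring
      have h3 : u * g = g * u := by ring
      have h4 : 2 * g * u = g * u + g * u := by ring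
      omega
    have hsmall : 4 * g < 2 ^ (g * u) := by
      have h1 : 4 * g < 4 * 2 ^ g := by
        have := Nat.lt_two_pow_self (n := g)
        omega
      have h2 : (4:ℕ) * 2 ^ g = 2 ^ (g + 2) := by rw [pow_add]; ring
      have h3 : (2:ℕ) ^ (g + 2) ≤ 2 ^ (g * u) := by
        apply Nat.pow_le_pow_right (by omega)
        have : g * 3 ≤ g * u := Nat.mul_le_mul_left g hu3
        omega
      omega
    rw [en, es, eexp, pow_add]
    calc 4 * g * 2 ^ (2 * g * u * g) < 2 ^ (g * u) * 2 ^ (2 * g * u * g) :=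
        (Nat.mul_lt_mul_right (Nat.pow_pos (by omega))).mpr hsmall
      _ = 2 ^ (2 * g * u * g) * 2 ^ (g * u) := by ring
  have hB : 2 * n ^ r < 2 ^ N2 := by
    have en : n ^ r = 2 ^ (2 * g * u * r) := by rw [hndef, ← pow_mul]
    have e2 : (2:ℕ) ^ (2 * g * u * r + 2) = 2 ^ (2 * g * u * r) * 4 := by
      rw [pow_add]; norm_num
    rw [en, hN2def, e2]
    have : 0 < (2:ℕ) ^ (2 * g * u * r) := Nat.pow_pos (by omega)
    omega
  have h2r : 2 ≤ r := by
    have h1 : 2 * 1 * 1 ≤ 2 * s * (2 * g * u + 2) :=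
      Nat.mul_le_mul (Nat.mul_le_mul (le_refl 2) (by omega)) (by omega)
    omega
  have hQr : 2 * (s * N2) ≤ r * (r - 1) := by
    have e1 : 2 * (s * N2) = 2 * s * (2 * g * u) * r + 4 * s := by rw [hN2def]; ring
    have e2 : r * r = 2 * s * (2 * g * u) * r + 4 * s * r := by
      nth_rewrite 1 [hrdef]; ring
    have e3 : r * (r - 1) = r * r - r := by
      obtain ⟨r', hr'⟩ : ∃ r', r = r' + 1 := ⟨r - 1, by omega⟩
      rw [hr']
      simp only [Nat.add_sub_cancel]
      have h1 : (r' + 1) * (r' + 1) = (r' + 1) * r' + (r' + 1) := by ring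
      omega
    have e4 : 4 * s * r = 2 * s * r + 2 * s * r := by ring
    have e5 : 4 * s ≤ 2 * s * r := by
      have h1 : 2 * s * 2 ≤ 2 * s * r := Nat.mul_le_mul_left (2 * s) h2r
      have h2 : 2 * s * 2 = 4 * s := by ring
      omega
    have e6 : r ≤ 2 * s * r := Nat.le_mul_of_pos_left r (by omega)
    omega
  have hrn : r ≤ n := by
    rw [hns, hrdef]
    have h1 : 2 * (2 * g * u + 2) ≤ 2 ^ u := by
      have h2 : 2 * (2 * g * u + 2) ≤ 4 * c * (2 * g * u + 2) :=
        Nat.mul_le_mul_right _ (by omega)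
      omega
    calc 2 * s * (2 * g * u + 2) = s * (2 * (2 * g * u + 2)) := by ring
      _ ≤ s * 2 ^ u := Nat.mul_le_mul_left s h1
  have hcr : 2 * c * r < n := by
    rw [hns, hrdef]
    have h1 : 2 * c * (2 * s * (2 * g * u + 2)) = s * (4 * c * (2 * g * u + 2)) := by ring
    rw [h1]
    exact (Nat.mul_lt_mul_left (by omega)).mpr h16
  obtain ⟨H, hH1, hH2⟩ := core g c n s r N2 h2s h0n hsn hgn hA hB hQr hrn h2r hcr
  exact ⟨n, h0n, H, fun k f hk => hH1 k f (by omega), hH2⟩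

open Finset

theorem minimize {n c : ℕ} (hc : 1 ≤ c) :
    ∀ (N : ℕ) (H : SimpleGraph (Fin n)), H.edgeSet.ncard ≤ N → ¬ H.Colorable (c - 1) →
    ∃ H' : SimpleGraph (Fin n), H' ≤ H ∧ ¬ H'.Colorable (c - 1) ∧ H'.Colorable c := by
  intro N
  induction N with
  | zero =>
    intro H hN hcol
    refine ⟨H, le_refl _, hcol, ?_⟩
    have hempty : H.edgeSet = ∅ := by
      rw [← Set.ncard_eq_zero (Set.toFinite _)] at *
      omega
    have hnoadj : ∀ x y, ¬ H.Adj x y := by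
      intro x y hxy
      have : s(x, y) ∈ H.edgeSet := hxy
      rw [hempty] at this
      exact this
    refine ⟨SimpleGraph.Coloring.mk (fun _ => ⟨0, by omega⟩) ?_⟩
    intro v w hvw
    exact absurd hvw (hnoadj v w)
  | succ N ih =>
    intro H hN hcol
    by_cases hempty : H.edgeSet = ∅
    · have hnoadj : ∀ x y, ¬ H.Adj x y := by
        intro x y hxy
        have : s(x, y) ∈ H.edgeSet := hxy
        rw [hempty] at this
        exact this
      refine ⟨H, le_refl _, hcol, ?_⟩
      refine ⟨SimpleGraph.Coloring.mk (fun _ => ⟨0, by omega⟩) ?_⟩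
      intro v w hvw
      exact absurd hvw (hnoadj v w)
    · obtain ⟨e, he⟩ := Set.nonempty_iff_ne_empty.mpr hempty
      by_cases hdel : (H.deleteEdges {e}).Colorable (c - 1)
      · -- H itself is edge-minimal enough: build a c-coloring
        obtain ⟨x, y, rfl⟩ : ∃ x y, e = s(x, y) := by
          induction e using Sym2.ind with
          | _ x y => exact ⟨x, y, rfl⟩
        obtain ⟨κ⟩ := hdel
        refine ⟨H, le_refl _, hcol, ?_⟩
        have hcol' : H.Coloring (Option (Fin (c - 1))) := by
          refine SimpleGraph.Coloring.mk
            (fun v => if v = x then none else some (κ v)) ?_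
          intro u v huv
          by_cases hu : u = x
          · have hv : v ≠ x := by
              rintro rfl
              rw [hu] at huv
              exact H.loopless.irrefl _ huv
            simp [hu, hv]
          · by_cases hv : v = x
            · simp [hu, hv]
            · simp only [if_neg hu, if_neg hv, ne_eq, Option.some_inj]
              have hadj : (H.deleteEdges {s(x, y)}).Adj u v := by
                rw [SimpleGraph.deleteEdges_adj]
                refine ⟨huv, ?_⟩
                intro hmem
                rw [Set.mem_singleton_iff, Sym2.eq_iff] at hmem
                rcases hmem with ⟨h1, -⟩ | ⟨-, h2⟩
                · exact hu h1
                · exact hv h2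
              exact κ.valid hadj
        have hcc := hcol'.colorable
        rwa [Fintype.card_option, Fintype.card_fin, Nat.sub_add_cancel hc] at hcc
      · have hN' : (H.deleteEdges {e}).edgeSet.ncard ≤ N := by
          have hlt : (H.deleteEdges {e}).edgeSet.ncard < H.edgeSet.ncard := by
            rw [SimpleGraph.edgeSet_deleteEdges]
            exact Set.ncard_diff_singleton_lt_of_mem he (Set.toFinite _)
          omega
        obtain ⟨H', h1, h2, h3⟩ := ih (H.deleteEdges {e}) hN' hdel
        exact ⟨H', le_trans h1 (SimpleGraph.deleteEdges_le _), h2, h3⟩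


lemma chain_mono {A : V → V → Prop} {ν : V → ℕ} (hmono : ∀ a b, A a b → ν a < ν b) :
    ∀ (l : List V) (x y : V), List.Chain A x (l ++ [y]) → ν x < ν y := by
  intro l
  induction l with
  | nil =>
    intro x y h
    rw [List.nil_append] at h; simp only [List.Chain] at h; rw [List.chain_cons] at h
    exact hmono _ _ h.1
  | cons a l ih =>
    intro x y h
    rw [List.cons_append] at h; simp only [List.Chain] at h; rw [List.chain_cons] at h
    exact lt_trans (hmono _ _ h.1) (ih a y h.2)

lemma sigma_const {m : ℕ} [NeZero m] (σ : ZMod m → Bool)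
    (h : ∀ i, σ i = σ (i + 1)) : ∀ i j, σ i = σ j := by
  have key : ∀ (t : ℕ) (i : ZMod m), σ (i + (t : ZMod m)) = σ i := by
    intro t
    induction t with
    | zero => intro i; simp
    | succ t ih =>
      intro i
      have e : i + ((t + 1 : ℕ) : ZMod m) = (i + (t : ZMod m)) + 1 := by
        push_cast; ring
      rw [e, ← h (i + (t : ZMod m)), ih]
  intro i j
  have e : i + (((j - i).val : ℕ) : ZMod m) = j := by
    rw [ZMod.natCast_zmod_val]; ring
  rw [← e, key]


/-- For any positive integers `b, c`, there exists an acyclic digraph `D` with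
`χ(D) ≥ c` in which every oriented cycle has more than `b` blocks (the number of
blocks of a non-directed oriented cycle equals the number of changes of
orientation around the cycle). -/
theorem exists_acyclic_large_chromatic_many_blocks
    (b c : ℕ) (hb : 0 < b) (hc : 0 < c) :
    ∃ (n : ℕ) (A : Fin n → Fin n → Prop),
      (∀ v, ¬ A v v) ∧ Acyclic A ∧
      ((c : ℕ∞) ≤ (underlying A).chromaticNumber) ∧
      ∀ (m : ℕ) (f : ZMod m → Fin n) (σ : ZMod m → Bool),
        3 ≤ m → Function.Injective f →
        (∀ i : ZMod m, (σ i = true ∧ A (f i) (f (i + 1))) ∨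
                        (σ i = false ∧ A (f (i + 1)) (f i))) →
        b < {i : ZMod m | σ i ≠ σ (i + 1)}.ncard := by
  classical
  by_cases hc1 : c = 1
  · -- trivial case: a single vertex with no arcs
    subst hc1
    refine ⟨1, fun _ _ => False, fun v h => h, ?_, ?_, ?_⟩
    · rintro ⟨x, l, hnd, hch⟩
      cases l with
      | nil => rw [List.nil_append] at hch; simp only [List.Chain] at hch; rw [List.chain_cons] at hch; exact hch.1
      | cons a l => rw [List.cons_append] at hch; simp only [List.Chain] at hch; rw [List.chain_cons] at hch; exact hch.1
    · have hbot : underlying (fun _ _ : Fin 1 => False) = ⊥ := by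
        ext x y
        simp [underlying]
      rw [hbot, SimpleGraph.chromaticNumber_bot]
      norm_num
    · intro m f σ hm hinj harc
      exfalso
      obtain ⟨k, rfl⟩ : ∃ k, m = k + 3 := ⟨m - 3, by omega⟩
      have := Fintype.card_le_of_injective f hinj
      rw [ZMod.card, Fintype.card_fin] at this
      omega
  · have hc2 : 2 ≤ c := by omega
    obtain ⟨n, h0n, H, hshort, hncol⟩ := numeric b c (by omega) (by omega)
    obtain ⟨H', hle, hncol', hcol'⟩ :=
      minimize (by omega : 1 ≤ c) H.edgeSet.ncard H (le_refl _) hncol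
    obtain ⟨κ⟩ := hcol'
    set A : Fin n → Fin n → Prop := fun x y => H'.Adj x y ∧ κ x < κ y with hAdef
    have hmono : ∀ a b : Fin n, A a b → (κ a : ℕ) < (κ b : ℕ) := by
      intro a b hab
      exact hab.2
    refine ⟨n, A, ?_, ?_, ?_, ?_⟩
    · intro v hv
      exact H'.loopless.irrefl v hv.1
    · rintro ⟨x, l, hnd, hch⟩
      have := chain_mono hmono l x x (by
        exact List.Chain.imp (fun a b hab => hab) hch)
      exact lt_irrefl _ this
    · have hu : underlying A = H' := by
        ext x y
        constructor
        · rintro ⟨hne, h | h⟩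
          · exact h.1
          · exact h.1.symm
        · intro hadj
          refine ⟨hadj.ne, ?_⟩
          rcases lt_or_gt_of_ne (κ.valid hadj) with h | h
          · exact Or.inl ⟨hadj, h⟩
          · exact Or.inr ⟨hadj.symm, h⟩
      rw [hu]
      have h1 : ¬ (H'.chromaticNumber ≤ ((c - 1 : ℕ) : ℕ∞)) := fun h =>
        hncol' (SimpleGraph.chromaticNumber_le_iff_colorable.mp h)
      have h2 : ((c - 1 : ℕ) : ℕ∞) < H'.chromaticNumber := not_le.mp h1
      have h3 : ((c - 1 : ℕ) : ℕ∞) + 1 ≤ H'.chromaticNumber :=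
        (ENat.add_one_le_iff (ENat.coe_ne_top _)).mpr h2
      have h4 : ((c - 1 : ℕ) : ℕ∞) + 1 = (c : ℕ∞) := by
        have e : ((c - 1 : ℕ) : ℕ∞) + ((1 : ℕ) : ℕ∞) = (((c - 1) + 1 : ℕ) : ℕ∞) :=
          (Nat.cast_add _ _).symm
        rw [show (1 : ℕ∞) = ((1 : ℕ) : ℕ∞) from rfl, e]
        congr 1
        omega
      rwa [h4] at h3
    · intro m f σ hm hinj harc
      obtain ⟨k, rfl⟩ : ∃ k, m = k + 3 := ⟨m - 3, by omega⟩
      set ν : ZMod (k + 3) → ℕ := fun i => (κ (f i) : ℕ) with hνdef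
      have hνlt : ∀ i, ν i < c := fun i => (κ (f i)).is_lt
      have stepT : ∀ i, σ i = true → ν i < ν (i + 1) := by
        intro i hσ
        rcases harc i with ⟨h1, h2⟩ | ⟨h1, h2⟩
        · exact h2.2
        · rw [hσ] at h1; exact absurd h1 (by simp)
      have stepF : ∀ i, σ i = false → ν (i + 1) < ν i := by
        intro i hσ
        rcases harc i with ⟨h1, h2⟩ | ⟨h1, h2⟩
        · rw [hσ] at h1; exact absurd h1 (by simp)
        · exact h2.2
      have hadjH : ∀ i, H.Adj (f i) (f (i + 1)) := by
        intro i
        rcases harc i with ⟨h1, h2⟩ | ⟨h1, h2⟩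
        · exact hle h2.1
        · exact (hle h2.1).symm
      have hmgt : b * c < k + 3 := by
        by_contra hcon
        push_neg at hcon
        exact hshort k f hcon hinj hadjH
      set C : Finset (ZMod (k + 3)) := univ.filter (fun i => σ i ≠ σ (i + 1)) with hCdef
      have hncard : {i : ZMod (k + 3) | σ i ≠ σ (i + 1)}.ncard = C.card := by
        rw [hCdef, ← Set.toFinset_setOf, Set.ncard_eq_toFinset_card']
      rw [hncard]
      by_cases hCne : C.Nonempty
      · -- the injection argument
        have hex : ∀ i : ZMod (k + 3), ∃ t : ℕ,
            σ (i + (t : ZMod (k + 3))) ≠ σ (i + (t : ZMod (k + 3)) + 1) := by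
          intro i
          obtain ⟨j, hj⟩ := hCne
          rw [hCdef, mem_filter] at hj
          refine ⟨(j - i).val, ?_⟩
          rw [ZMod.natCast_zmod_val]
          have e : i + (j - i) = j := by ring
          rw [e]
          exact hj.2
        set d : ZMod (k + 3) → ℕ := fun i => Nat.find (hex i) with hddef
        have hd : ∀ i, σ (i + (d i : ZMod (k + 3))) ≠ σ (i + (d i : ZMod (k + 3)) + 1) :=
          fun i => Nat.find_spec (hex i)
        have hdmin : ∀ i (t : ℕ), t < d i →
            σ (i + (t : ZMod (k + 3))) = σ (i + (t : ZMod (k + 3)) + 1) := by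
          intro i t ht
          have := Nat.find_min (hex i) ht
          exact not_not.mp this
        have hrun : ∀ (i : ZMod (k + 3)) (t : ℕ), t ≤ d i →
            σ (i + (t : ZMod (k + 3))) = σ i ∧
            (0 < t → (σ i = true → ν i < ν (i + (t : ZMod (k + 3)))) ∧
                     (σ i = false → ν (i + (t : ZMod (k + 3))) < ν i)) := by
          intro i t
          induction t with
          | zero => intro _; simp
          | succ t ih =>
            intro ht
            obtain ⟨ihσ, ihν⟩ := ih (by omega)
            have ecast : i + ((t + 1 : ℕ) : ZMod (k + 3)) = (i + (t : ZMod (k + 3))) + 1 := by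
              push_cast; ring
            have hσt : σ (i + (t : ZMod (k + 3))) = σ i := ihσ
            have hconst : σ (i + (t : ZMod (k + 3))) = σ (i + (t : ZMod (k + 3)) + 1) :=
              hdmin i t (by omega)
            constructor
            · rw [ecast, ← hconst, hσt]
            · intro _
              constructor
              · intro hσi
                have hstep := stepT (i + (t : ZMod (k + 3))) (by rw [hσt, hσi])
                rw [ecast]
                rcases Nat.eq_zero_or_pos t with rfl | htpos
                · simpa using hstep
                · exact lt_trans ((ihν htpos).1 hσi) hstep
              · intro hσi
                have hstep := stepF (i + (t : ZMod (k + 3))) (by rw [hσt, hσi])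
                rw [ecast]
                rcases Nat.eq_zero_or_pos t with rfl | htpos
                · simpa using hstep
                · exact lt_trans hstep ((ihν htpos).2 hσi)
        -- the injection i ↦ (i + d i, ν i)
        have haux : ∀ i i' : ZMod (k + 3), d i' ≤ d i →
            i + (d i : ZMod (k + 3)) = i' + (d i' : ZMod (k + 3)) → ν i = ν i' → i = i' := by
          intro i i' hdle heq hν
          set u : ℕ := d i - d i' with hudef
          have hu : (u : ZMod (k + 3)) + (d i' : ZMod (k + 3)) = (d i : ZMod (k + 3)) := by
            rw [← Nat.cast_add]
            congr 1
            omega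
          have hii' : i + (u : ZMod (k + 3)) = i' := by
            apply add_right_cancel (b := (d i' : ZMod (k + 3)))
            rw [add_assoc, hu, heq]
          rcases Nat.eq_zero_or_pos u with hu0 | hupos
          · rw [← hii', hu0]; simp
          · exfalso
            have hrun' := (hrun i u (by omega)).2 hupos
            cases hσi : σ i with
            | true =>
              have := hrun'.1 hσi
              rw [hii', hν] at this
              exact lt_irrefl _ this
            | false =>
              have := hrun'.2 hσi
              rw [hii', hν] at this
              exact lt_irrefl _ this
        have hinj2 : Set.InjOn (fun i => (i + (d i : ZMod (k + 3)), ν i))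
            ((univ : Finset (ZMod (k + 3))) : Set (ZMod (k + 3))) := by
          intro i _ i' _ hii'
          simp only [Prod.mk.injEq] at hii'
          rcases le_total (d i') (d i) with hdle | hdle
          · exact haux i i' hdle hii'.1 hii'.2
          · exact (haux i' i hdle hii'.1.symm hii'.2.symm).symm
        have hmaps : ∀ i ∈ (univ : Finset (ZMod (k + 3))),
            (i + (d i : ZMod (k + 3)), ν i) ∈ C ×ˢ range c := by
          intro i _
          rw [mem_product]
          refine ⟨?_, mem_range.mpr (hνlt i)⟩
          rw [hCdef, mem_filter]
          exact ⟨mem_univ _, hd i⟩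
        have hcard := Finset.card_le_card_of_injOn _ hmaps hinj2
        rw [card_univ, ZMod.card, card_product, card_range] at hcard
        have : b * c < C.card * c := lt_of_lt_of_le hmgt hcard
        exact Nat.lt_of_mul_lt_mul_right this
      · -- no sign change: contradiction with argmin/argmax
        exfalso
        rw [not_nonempty_iff_eq_empty] at hCne
        have hall : ∀ i : ZMod (k + 3), σ i = σ (i + 1) := by
          intro i
          by_contra hcon
          have : i ∈ C := by rw [hCdef, mem_filter]; exact ⟨mem_univ _, hcon⟩
          rw [hCne] at this
          exact absurd this (notMem_empty i)
        have hconst := sigma_const σ hall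
        cases hσ0 : σ 0 with
        | true =>
          obtain ⟨i0, -, hmax⟩ := exists_max_image (univ : Finset (ZMod (k + 3))) ν ⟨0, mem_univ 0⟩
          have := stepT i0 (by rw [hconst i0 0, hσ0])
          exact absurd (hmax (i0 + 1) (mem_univ _)) (by omega)
        | false =>
          obtain ⟨i0, -, hmin⟩ := exists_min_image (univ : Finset (ZMod (k + 3))) ν ⟨0, mem_univ 0⟩
          have := stepF i0 (by rw [hconst i0 0, hσ0])
          exact absurd (hmin (i0 + 1) (mem_univ _)) (by omega)
end
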